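/- arXiv:1103.3437 — 5 statements merged into one kernel-verified Lean document; each statement's English description precedes it below -/
import Mathlib

section
/- The odd tensor product rule is associative: for abstract q(n)-crystals B1, B2, B3 and the operator f̄_1 defined by the rule 'f̄_1(b1 ⊗ b2) = f̄_1 b1 ⊗ b2 if ⟨k_1, wt b2⟩ = ⟨k_2, wt b2⟩ = 0, and b1 ⊗ f̄_1 b2 otherwise', the canonical bijection (B1 ⊗ B2) ⊗ B3 → B1 ⊗ (B2 ⊗ B3) commutes with f̄_1 (and similarly with ē_1). -/
/-- Data underlying the odd Kashiwara operators on an abstract `q(n)`-crystal: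
a weight map to `ℤ^{n+2}` (so that the first two coordinates always exist) and
partial operators `f̄₁`, `ē₁`. -/
structure OddData (n : ℕ) (B : Type*) where
  wt : B → Fin (n + 2) → ℤ
  fbar : B → Option B
  ebar : B → Option B

/-- The axioms: weights have nonnegative coordinates, `f̄₁` lowers the weight by
`α₁ = ε₁ - ε₂`, `ē₁` raises it by `α₁`, and `f̄₁ b = b' ↔ ē₁ b' = b`. -/
def OddData.Good {n : ℕ} {B : Type*} (D : OddData n B) : Prop :=
  (∀ b j, 0 ≤ D.wt b j) ∧
  (∀ b b', D.fbar b = some b' →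
    D.wt b' 0 = D.wt b 0 - 1 ∧ D.wt b' 1 = D.wt b 1 + 1 ∧
      ∀ j, j ≠ 0 → j ≠ 1 → D.wt b' j = D.wt b j) ∧
  (∀ b b', D.ebar b = some b' →
    D.wt b' 0 = D.wt b 0 + 1 ∧ D.wt b' 1 = D.wt b 1 - 1 ∧
      ∀ j, j ≠ 0 → j ≠ 1 → D.wt b' j = D.wt b j) ∧
  (∀ b b', D.fbar b = some b' ↔ D.ebar b' = some b)

/-- The odd tensor product rule: `f̄₁(b₁ ⊗ b₂) = f̄₁ b₁ ⊗ b₂` if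
`⟨k₁, wt b₂⟩ = ⟨k₂, wt b₂⟩ = 0` and `b₁ ⊗ f̄₁ b₂` otherwise (same for `ē₁`). -/
def OddData.tensor {n : ℕ} {B1 B2 : Type*} (D1 : OddData n B1) (D2 : OddData n B2) :
    OddData n (B1 × B2) where
  wt p j := D1.wt p.1 j + D2.wt p.2 j
  fbar p :=
    if D2.wt p.2 0 = 0 ∧ D2.wt p.2 1 = 0 then (D1.fbar p.1).map (·, p.2)
    else (D2.fbar p.2).map (p.1, ·)
  ebar p :=
    if D2.wt p.2 0 = 0 ∧ D2.wt p.2 1 = 0 then (D1.ebar p.1).map (·, p.2)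
    else (D2.ebar p.2).map (p.1, ·)

/-- The odd tensor product rule is associative: under the canonical
bijection `(B1 × B2) × B3 ≃ B1 × (B2 × B3)` the two induced operators `f̄₁`
(and `ē₁`) agree. -/
theorem stmt_6 {n : ℕ} {B1 B2 B3 : Type*}
    (D1 : OddData n B1) (D2 : OddData n B2) (D3 : OddData n B3)
    (h1 : D1.Good) (h2 : D2.Good) (h3 : D3.Good) :
    ∀ (b1 : B1) (b2 : B2) (b3 : B3),
      (((D1.tensor D2).tensor D3).fbar ((b1, b2), b3)).map
          (fun p => (p.1.1, (p.1.2, p.2))) =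
        (D1.tensor (D2.tensor D3)).fbar (b1, (b2, b3)) ∧
      (((D1.tensor D2).tensor D3).ebar ((b1, b2), b3)).map
          (fun p => (p.1.1, (p.1.2, p.2))) =
        (D1.tensor (D2.tensor D3)).ebar (b1, (b2, b3)) := by

  intro b1 b2 b3
  obtain ⟨hn2, -⟩ := h2
  obtain ⟨hn3, -⟩ := h3
  have h20 := hn2 b2 0; have h21 := hn2 b2 1
  have h30 := hn3 b3 0; have h31 := hn3 b3 1
  by_cases h3z : D3.wt b3 0 = 0 ∧ D3.wt b3 1 = 0
  · by_cases h2z : D2.wt b2 0 = 0 ∧ D2.wt b2 1 = 0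
    · simp [OddData.tensor, h3z, h2z, h2z.1, h2z.2, h3z.1, h3z.2, Option.map_map,
        Function.comp]
      exact ⟨rfl, rfl⟩
    · have hne : ¬ (D2.wt b2 0 + D3.wt b3 0 = 0 ∧ D2.wt b2 1 + D3.wt b3 1 = 0) := by
        intro h; exact h2z ⟨by omega, by omega⟩
      simp [OddData.tensor, h3z, h2z, hne, Option.map_map, Function.comp]
      exact ⟨rfl, rfl⟩
  · have hne : ¬ (D2.wt b2 0 + D3.wt b3 0 = 0 ∧ D2.wt b2 1 + D3.wt b3 1 = 0) := by
      intro h; exact h3z ⟨by omega, by omega⟩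
    simp [OddData.tensor, h3z, hne, Option.map_map, Function.comp]
    exact ⟨rfl, rfl⟩
end

section
/- If b is a highest weight vector in the q(n)-crystal B^{⊗N}, then wt(b) is a strict partition, i.e., wt(b) = (λ_1, ..., λ_n) satisfies λ_1 > λ_2 > ... > λ_r > λ_{r+1} = ... = λ_n = 0 for some r. -/
/-!
The `gl(n)`-crystal `𝐁 = {1, …, n}` of the vector representation and its tensor
powers `𝐁^{⊗N}`, realized concretely on words (lists) of letters.  Letters are
`0`-based: the natural number `a` stands for the letter `a+1`, so the letters of
`𝐁` are `0, 1, …, n-1`, and the operator index `i` (`0`-based, standing for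
`i+1 ∈ {1, …, n-1}`) acts on the letters `i, i+1`.  A list `[a₁, …, a_N]`
stands for the tensor `a₁ ⊗ ⋯ ⊗ a_N`.
-/

namespace QWord

/-- `e i` on a single letter. -/
def eL (i a : ℕ) : Option ℕ := if a = i + 1 then some i else none

/-- `f i` on a single letter. -/
def fL (i a : ℕ) : Option ℕ := if a = i then some (i + 1) else none

/-- `φ i` of a single letter. -/
def phiL (i a : ℕ) : ℕ := if a = i then 1 else 0

/-- `ε i` of a single letter. -/
def epsL (i a : ℕ) : ℕ := if a = i + 1 then 1 else 0

/-- `ε i` of a word, via `ε(b₁ ⊗ b₂) = max (ε(b₁), ε(b₂) - ⟨hᵢ, wt b₁⟩)`. -/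
def epsW (i : ℕ) : List ℕ → ℕ
  | [] => 0
  | a :: w => max (epsL i a) (epsW i w + epsL i a - phiL i a)

/-- `φ i` of a word, via `φ(b₁ ⊗ b₂) = max (φ(b₂), φ(b₁) + ⟨hᵢ, wt b₂⟩)`. -/
def phiW (i : ℕ) : List ℕ → ℕ
  | [] => 0
  | a :: w => max (phiW i w) (phiL i a + w.count i - w.count (i + 1))

/-- The even Kashiwara operator `e i` on words (the tensor product rule:
`e(b₁ ⊗ b₂) = e b₁ ⊗ b₂` if `φ(b₁) ≥ ε(b₂)`, else `b₁ ⊗ e b₂`). -/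
def eW (i : ℕ) : List ℕ → Option (List ℕ)
  | [] => none
  | a :: w =>
    if epsW i w ≤ phiL i a then (eL i a).map (· :: w)
    else (eW i w).map (a :: ·)

/-- The even Kashiwara operator `f i` on words (the tensor product rule:
`f(b₁ ⊗ b₂) = f b₁ ⊗ b₂` if `φ(b₁) > ε(b₂)`, else `b₁ ⊗ f b₂`). -/
def fW (i : ℕ) : List ℕ → Option (List ℕ)
  | [] => none
  | a :: w =>
    if epsW i w < phiL i a then (fL i a).map (· :: w)
    else (fW i w).map (a :: ·)

/-- The odd Kashiwara operator `ē₁` on words: by the odd tensor product rule it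
acts on the rightmost letter of the word lying in `{1, 2}` (here `{0, 1}`), and
is nonzero exactly when that letter is `2` (here `1`), turning it into `1`
(here `0`). -/
def ebarW : List ℕ → Option (List ℕ)
  | [] => none
  | a :: w =>
    if w.count 0 = 0 ∧ w.count 1 = 0 then
      (if a = 1 then some 0 else none).map (· :: w)
    else (ebarW w).map (a :: ·)

/-- The odd Kashiwara operator `f̄₁` on words. -/
def fbarW : List ℕ → Option (List ℕ)
  | [] => none
  | a :: w =>
    if w.count 0 = 0 ∧ w.count 1 = 0 then
      (if a = 0 then some 1 else none).map (· :: w)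
    else (fbarW w).map (a :: ·)

/-- Iterate a partial operator. -/
def iterOpt (g : List ℕ → Option (List ℕ)) : ℕ → List ℕ → Option (List ℕ)
  | 0, b => some b
  | k + 1, b => (g b).bind (iterOpt g k)

/-- The Weyl group reflection `Sᵢ b = fᵢ^{⟨hᵢ, wt b⟩} b` if `⟨hᵢ, wt b⟩ ≥ 0`
and `eᵢ^{-⟨hᵢ, wt b⟩} b` otherwise; note `⟨hᵢ, wt b⟩` is
`count i - count (i+1)` for a word. -/
def SiW (i : ℕ) (b : List ℕ) : Option (List ℕ) :=
  if b.count (i + 1) ≤ b.count i then iterOpt (fW i) (b.count i - b.count (i + 1)) b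
  else iterOpt (eW i) (b.count (i + 1) - b.count i) b

/-- `applySeq [j₁, …, j_k] b = (S_{j₁} ∘ ⋯ ∘ S_{j_k}) b`. -/
def applySeq : List ℕ → List ℕ → Option (List ℕ)
  | [], b => some b
  | j :: t, b => (applySeq t b).bind (SiW j)

/-- The reduced word (`0`-based list of simple reflections) of
`w_i = s₂ ⋯ s_i s₁ ⋯ s_{i-1}`, for the `1`-based index `i`. -/
def wiList (i : ℕ) : List ℕ := (List.range (i - 1)).map (· + 1) ++ List.range (i - 1)

/-- The odd operator `ē_i = S_{w_i}⁻¹ ∘ ē₁ ∘ S_{w_i}` on words; here `i` is the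
`0`-based index (so `ebarWi 0 = ē₁`, up to the trivial conjugation). -/
def ebarWi (i : ℕ) (b : List ℕ) : Option (List ℕ) :=
  ((applySeq (wiList (i + 1)) b).bind ebarW).bind (applySeq (wiList (i + 1)).reverse)

end QWord

namespace QProof
open QWord

/-- signed contribution of one letter to the `i`-weight pairing -/
def dlt (i a : ℕ) : ℤ := (if a = i then 1 else 0) - (if a = i + 1 then 1 else 0)

/-- prefix pairing `⟨h_i, wt(take p)⟩` -/
def Dz (i : ℕ) (x : List ℕ) (p : ℕ) : ℤ :=
  ((x.take p).count i : ℤ) - ((x.take p).count (i + 1) : ℤ)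

/-- minimum of `Dz i x p` over all `p` -/
def mDz (i : ℕ) : List ℕ → ℤ
  | [] => 0
  | a :: w => min 0 (dlt i a + mDz i w)

@[simp] lemma Dz_nil (i p : ℕ) : Dz i [] p = 0 := by simp [Dz]
@[simp] lemma Dz_zero (i : ℕ) (x : List ℕ) : Dz i x 0 = 0 := by simp [Dz]
lemma Dz_cons (i a : ℕ) (w : List ℕ) (p : ℕ) :
    Dz i (a :: w) (p + 1) = dlt i a + Dz i w p := by
  simp [Dz, dlt, List.count_cons]
  by_cases h1 : a = i <;> by_cases h2 : a = i + 1 <;> simp [h1, h2] <;> omega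

lemma Dz_add (i : ℕ) (x : List ℕ) (p r : ℕ) :
    Dz i x (p + r) = Dz i x p + Dz i (x.drop p) r := by
  simp [Dz, List.take_add, List.count_append]; omega

lemma mDz_nonpos (i : ℕ) (x : List ℕ) : mDz i x ≤ 0 := by
  cases x with
  | nil => simp [mDz]
  | cons a w => simp [mDz]

lemma mDz_le_D (i : ℕ) (x : List ℕ) (p : ℕ) : mDz i x ≤ Dz i x p := by
  induction x generalizing p with
  | nil => simp [mDz]
  | cons a w ih =>
    cases p with
    | zero =>
      have := mDz_nonpos i (a :: w)
      simpa using this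
    | succ p =>
      rw [Dz_cons]
      have := ih p
      simp only [mDz]
      omega

lemma mDz_attained (i : ℕ) (x : List ℕ) : ∃ p, mDz i x = Dz i x p := by
  induction x with
  | nil => exact ⟨0, by simp [mDz]⟩
  | cons a w ih =>
    obtain ⟨p, hp⟩ := ih
    by_cases h : (0:ℤ) ≤ dlt i a + mDz i w
    · exact ⟨0, by simp only [mDz, Dz_zero]; omega⟩
    · refine ⟨p + 1, ?_⟩
      rw [Dz_cons, ← hp]
      simp only [mDz]; omega

lemma mDz_eq_zero (i : ℕ) (x : List ℕ) (h : ∀ p, 0 ≤ Dz i x p) : mDz i x = 0 := by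
  obtain ⟨p, hp⟩ := mDz_attained i x
  have := h p
  have := mDz_nonpos i x
  omega

/-- `Mz i x p` is the minimum of `Dz i x p'` over `p' ≥ p`. -/
def Mz (i : ℕ) (x : List ℕ) (p : ℕ) : ℤ := Dz i x p + mDz i (x.drop p)

lemma mDz_le_M (i : ℕ) (x : List ℕ) (p : ℕ) : mDz i x ≤ Mz i x p := by
  induction x generalizing p with
  | nil => simp [mDz, Mz]
  | cons a w ih =>
    cases p with
    | zero => simp [Mz, mDz]
    | succ p =>
      have := ih p
      simp only [Mz, Dz_cons, List.drop_succ_cons, mDz] at *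
      omega

lemma Mz_nonneg_of (i : ℕ) (x : List ℕ) (p : ℕ) (h : mDz i x = 0) : 0 ≤ Mz i x p := by
  have := mDz_le_M i x p; omega

lemma Mz_le_D (i : ℕ) (x : List ℕ) (p r : ℕ) : Mz i x p ≤ Dz i x (p + r) := by
  have h := mDz_le_D i (x.drop p) r
  have := Dz_add i x p r
  simp only [Mz]; omega

lemma Mz_mono (i : ℕ) (x : List ℕ) (p r : ℕ) : Mz i x p ≤ Mz i x (p + r) := by
  have h := mDz_le_M i (x.drop p) r
  have h2 := Dz_add i x p r
  have h3 : (x.drop p).drop r = x.drop (p + r) := by rw [List.drop_drop, Nat.add_comm]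
  simp only [Mz] at *
  rw [← h3]
  omega

lemma Mz_ge_of (i : ℕ) (x : List ℕ) (p : ℕ) (c : ℤ) (h : ∀ r, c ≤ Dz i x (p + r)) :
    c ≤ Mz i x p := by
  obtain ⟨r, hr⟩ := mDz_attained i (x.drop p)
  have := h r
  have := Dz_add i x p r
  simp only [Mz]; omega

lemma Dz_stable (i : ℕ) (x : List ℕ) (p : ℕ) (h : x.length ≤ p) : Dz i x p = Dz i x x.length := by
  simp [Dz, List.take_of_length_le h, List.take_length]

lemma Dz_length (i : ℕ) (x : List ℕ) : Dz i x x.length = (x.count i : ℤ) - x.count (i + 1) := by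
  simp [Dz, List.take_length]

/-- bridge: `epsW` equals `-mDz`. -/
lemma epsW_eq (i : ℕ) (x : List ℕ) : (epsW i x : ℤ) = - mDz i x := by
  induction x with
  | nil => simp [epsW, mDz]
  | cons a w ih =>
    by_cases h1 : a = i <;> by_cases h2 : a = i + 1 <;>
      simp only [epsW, mDz, epsL, phiL, dlt, h1, h2, if_pos, if_neg, if_true, if_false] <;>
      first
      | omega
      | (simp only [if_neg (by omega : ¬ (i:ℕ) = i + 1)] at * <;> omega)
      | (simp_all <;> omega)

@[simp] lemma dlt_self (i : ℕ) : dlt i i = 1 := by simp [dlt]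
@[simp] lemma dlt_sn (i : ℕ) : dlt i (i+1) = -1 := by
  have : i ≠ i + 1 := by omega
  simp [dlt, this]
lemma dlt_other {i a : ℕ} (h1 : a ≠ i) (h2 : a ≠ i + 1) : dlt i a = 0 := by
  simp [dlt, h1, h2]

lemma phiW_eq (i : ℕ) (x : List ℕ) : (phiW i x : ℤ) = Dz i x x.length - mDz i x := by
  induction x with
  | nil => simp [phiW, mDz]
  | cons a w ih =>
    have hD := Dz_length i w
    have hmp := mDz_nonpos i w
    simp only [phiW, List.length_cons, Dz_cons, mDz]
    by_cases h1 : a = i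
    · subst h1
      simp only [phiL, eq_self_iff_true, if_true, dlt_self]
      omega
    · by_cases h2 : a = i + 1
      · subst h2
        simp only [phiL, if_neg (show ¬ (i + 1 = i) by omega), dlt_sn]
        omega
      · simp only [phiL, if_neg h1, dlt_other h1 h2]
        omega

/-- total function: `k`-fold application of `f_i`. -/
def gF (i : ℕ) : ℕ → List ℕ → List ℕ
  | _, [] => []
  | k, a :: w =>
    if a = i ∧ epsW i w = 0 ∧ 1 ≤ k then (i + 1) :: gF i (k - 1) w
    else a :: gF i k w

@[simp] lemma gF_nil (i k : ℕ) : gF i k [] = [] := rfl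

lemma gF_zero (i : ℕ) (x : List ℕ) : gF i 0 x = x := by
  induction x with
  | nil => rfl
  | cons a w ih => simp [gF, ih]

lemma gF_length (i k : ℕ) (x : List ℕ) : (gF i k x).length = x.length := by
  induction x generalizing k with
  | nil => rfl
  | cons a w ih => by_cases h : a = i ∧ epsW i w = 0 ∧ 1 ≤ k <;> simp [gF, h, ih]

lemma Mz_cons (i a : ℕ) (w : List ℕ) (p : ℕ) :
    Mz i (a :: w) (p + 1) = dlt i a + Mz i w p := by
  simp only [Mz, Dz_cons, List.drop_succ_cons]; ring

lemma gF_count (i k : ℕ) (x : List ℕ) (p : ℕ) :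
    ((((gF i k x).take p).count (i+1) : ℤ)
      = ((x.take p).count (i+1) : ℤ) + min (k : ℤ) (Mz i x p - mDz i x))
  ∧ ((((gF i k x).take p).count i : ℤ)
      = ((x.take p).count i : ℤ) - min (k : ℤ) (Mz i x p - mDz i x)) := by
  induction x generalizing k p with
  | nil => simp [Mz, mDz]
  | cons a w ih =>
    cases p with
    | zero =>
      have : Mz i (a :: w) 0 - mDz i (a :: w) = 0 := by simp [Mz]
      rw [this]; simp
    | succ p =>
      have hM := mDz_le_M i w p
      have hmp := mDz_nonpos i w
      have hMc := Mz_cons i a w p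
      have hme := epsW_eq i w
      have hne : i ≠ i + 1 := by omega
      have hne' : i + 1 ≠ i := by omega
      by_cases hc : a = i ∧ epsW i w = 0 ∧ 1 ≤ k
      · have hg : gF i k (a :: w) = (i + 1) :: gF i (k - 1) w := by
          rw [gF, if_pos hc]
        obtain ⟨ha, hw, hk⟩ := hc
        have hIH := ih (k - 1) p
        subst ha
        rw [hg]
        rw [dlt_self] at hMc
        simp only [List.take_succ_cons, List.count_cons_self,
          List.count_cons_of_ne hne, List.count_cons_of_ne hne', mDz, dlt_self]
        constructor <;> omega
      · have hg : gF i k (a :: w) = a :: gF i k w := by rw [gF, if_neg hc]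
        have hIH := ih k p
        rw [hg]
        by_cases h1 : a = i
        · have hnz : ¬ (epsW i w = 0) ∨ k = 0 := by
            by_contra hx; push_neg at hx; exact hc ⟨h1, hx.1, by omega⟩
          subst h1
          rw [dlt_self] at hMc
          simp only [List.take_succ_cons, List.count_cons_self,
            List.count_cons_of_ne hne, List.count_cons_of_ne hne', mDz, dlt_self]
          constructor <;> omega
        · by_cases h2 : a = i + 1
          · subst h2
            rw [dlt_sn] at hMc
            simp only [List.take_succ_cons, List.count_cons_self,
              List.count_cons_of_ne hne', mDz, dlt_sn]
            constructor <;> omega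
          · have e1 : a ≠ i + 1 := h2
            rw [dlt_other h1 h2] at hMc
            simp only [List.take_succ_cons, List.count_cons_of_ne h1,
              List.count_cons_of_ne e1, mDz, dlt_other h1 h2]
            constructor <;> omega

lemma gF_count_other (i k : ℕ) (x : List ℕ) (c : ℕ) (hc1 : c ≠ i) (hc2 : c ≠ i + 1)
    (p : ℕ) : ((gF i k x).take p).count c = (x.take p).count c := by
  induction x generalizing k p with
  | nil => simp
  | cons a w ih =>
    cases p with
    | zero => simp
    | succ p =>
      by_cases h : a = i ∧ epsW i w = 0 ∧ 1 ≤ k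
      · have hg : gF i k (a :: w) = (i + 1) :: gF i (k - 1) w := by rw [gF, if_pos h]
        rw [hg]
        simp only [List.take_succ_cons, List.count_cons_of_ne (Ne.symm (show c ≠ i + 1 from hc2)),
          List.count_cons_of_ne (Ne.symm (h.1 ▸ hc1 : c ≠ a))]
        exact ih (k-1) p
      · have hg : gF i k (a :: w) = a :: gF i k w := by rw [gF, if_neg h]
        rw [hg]
        simp only [List.take_succ_cons, List.count_cons]
        rw [ih k p]

lemma gF_tcount (i k : ℕ) (x : List ℕ) (hk : (k : ℤ) ≤ Dz i x x.length - mDz i x) :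
    (((gF i k x).count (i+1) : ℤ) = (x.count (i+1) : ℤ) + k)
    ∧ (((gF i k x).count i : ℤ) = (x.count i : ℤ) - k) := by
  have h := gF_count i k x x.length
  have hlen : (gF i k x).take x.length = gF i k x := by
    rw [← gF_length i k x]; exact List.take_length
  have hx : x.take x.length = x := List.take_length
  rw [hlen, hx] at h
  have hMz : Mz i x x.length = Dz i x x.length := by
    simp [Mz, List.drop_length, mDz]
  rw [hMz] at h
  constructor <;> [skip; skip] <;> omega

lemma mDz_gF_le (i k : ℕ) (x : List ℕ) : mDz i (gF i k x) ≤ mDz i x := by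
  obtain ⟨p, hp⟩ := mDz_attained i x
  have h := gF_count i k x p
  have h2 := mDz_le_D i (gF i k x) p
  have hM := mDz_le_M i x p
  have hmin : (0:ℤ) ≤ min (k : ℤ) (Mz i x p - mDz i x) := by
    have : (0:ℤ) ≤ (k:ℤ) := by positivity
    omega
  simp only [Dz] at h2 hp ⊢
  omega

lemma epsW_gF_pos (i k : ℕ) (x : List ℕ) (h : epsW i x ≠ 0) : epsW i (gF i k x) ≠ 0 := by
  have h1 := epsW_eq i x
  have h2 := epsW_eq i (gF i k x)
  have h3 := mDz_gF_le i k x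
  omega

lemma phiW_gF (i k : ℕ) (x : List ℕ) (hk : k ≤ phiW i x) :
    phiW i (gF i k x) = phiW i x - k := by
  induction x generalizing k with
  | nil => simp_all [phiW]
  | cons a w ih =>
    have hpw := phiW_eq i w
    have hew := epsW_eq i w
    have hD := Dz_length i w
    have hmp := mDz_nonpos i w
    by_cases h : a = i ∧ epsW i w = 0 ∧ 1 ≤ k
    · have hg : gF i k (a :: w) = (i + 1) :: gF i (k - 1) w := by rw [gF, if_pos h]
      obtain ⟨ha, hw, hk1⟩ := h
      subst ha
      have hphix : phiW a (a :: w) = phiW a w + 1 := by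
        simp only [phiW, phiL, eq_self_iff_true, if_true]
        omega
      have hkw : k - 1 ≤ phiW a w := by rw [hphix] at hk; omega
      have hcnt := gF_tcount a (k-1) w (by push_cast; omega)
      rw [hg]
      simp only [phiW, phiL, if_neg (show ¬ (a + 1 = a) by omega), eq_self_iff_true,
        if_true]
      rw [ih (k-1) hkw]
      omega
    · have hg : gF i k (a :: w) = a :: gF i k w := by rw [gF, if_neg h]
      have hphi : phiW i (a :: w) = max (phiW i w) (phiL i a + w.count i - w.count (i+1)) := rfl
      have hkw : k ≤ phiW i w := by
        by_cases h1 : a = i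
        · subst h1
          have : ¬ (epsW a w = 0) ∨ k = 0 := by
            by_contra hx; push_neg at hx; exact h ⟨rfl, hx.1, by omega⟩
          simp only [phiL, eq_self_iff_true, if_true] at hphi
          omega
        · simp only [phiL, if_neg h1] at hphi
          omega
      have hcnt := gF_tcount i k w (by push_cast; omega)
      rw [hg]
      simp only [phiW]
      rw [ih k hkw]
      have hphig := phiW_eq i (gF i k w)
      by_cases h1 : a = i
      · subst h1
        simp only [phiL, eq_self_iff_true, if_true] at hphi ⊢
        omega
      · simp only [phiL, if_neg h1] at hphi ⊢
        omega

lemma gF_add (i j k : ℕ) (x : List ℕ) : gF i j (gF i k x) = gF i (j + k) x := by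
  induction x generalizing j k with
  | nil => simp
  | cons a w ih =>
    by_cases h : a = i ∧ epsW i w = 0 ∧ 1 ≤ k
    · have hg : gF i k (a :: w) = (i + 1) :: gF i (k - 1) w := by rw [gF, if_pos h]
      have hg2 : gF i (j + k) (a :: w) = (i + 1) :: gF i (j + k - 1) w := by
        have hk1 := h.2.2
        rw [gF, if_pos ⟨h.1, h.2.1, by omega⟩]
      rw [hg, hg2]
      have : gF i j ((i+1) :: gF i (k-1) w) = (i+1) :: gF i j (gF i (k-1) w) := by
        rw [gF, if_neg (by rintro ⟨h1, -, -⟩; omega)]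
      rw [this, ih]
      have heq : j + (k - 1) = j + k - 1 := by have := h.2.2; omega
      rw [heq]
    · have hg : gF i k (a :: w) = a :: gF i k w := by rw [gF, if_neg h]
      rw [hg]
      by_cases hj : a = i ∧ epsW i (gF i k w) = 0 ∧ 1 ≤ j
      · -- then epsW i w = 0 (since eps only grows) and k = 0
        have hw0 : epsW i w = 0 := by
          by_contra hx
          exact epsW_gF_pos i k w hx hj.2.1
        have hk0 : k = 0 := by
          by_contra hx
          exact h ⟨hj.1, hw0, by omega⟩
        subst hk0
        rw [gF_zero] at hj ⊢
        have hj1 : 1 ≤ j := hj.2.2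
        have hg2 : gF i (j + 0) (a :: w) = (i + 1) :: gF i (j + 0 - 1) w := by
          rw [gF, if_pos ⟨hj.1, hw0, by omega⟩]
        rw [gF, if_pos hj, hg2]
        congr 2
      · rw [gF, if_neg hj]
        by_cases hjk : a = i ∧ epsW i w = 0 ∧ 1 ≤ j + k
        · -- impossible: from h, eps w ≠ 0 or k = 0; from hj with eps(gF k w)... 
          exfalso
          have hw0 := hjk.2.1
          have hk0 : k = 0 := by
            by_contra hx; exact h ⟨hjk.1, hw0, by omega⟩
          subst hk0
          rw [gF_zero] at hj
          have hj1 : 1 ≤ j := by omega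
          exact hj ⟨hjk.1, hw0, hj1⟩
        · rw [gF, if_neg hjk, ih]

lemma fW_eq (i : ℕ) (x : List ℕ) (h : 1 ≤ phiW i x) : fW i x = some (gF i 1 x) := by
  induction x with
  | nil => simp [phiW] at h
  | cons a w ih =>
    by_cases hc : a = i ∧ epsW i w = 0
    · obtain ⟨ha, hw⟩ := hc
      subst ha
      have hcond : epsW a w < phiL a a := by
        simp [phiL, hw]
      rw [fW, if_pos hcond]
      have : gF a 1 (a :: w) = (a+1) :: gF a 0 w := by
        rw [gF, if_pos ⟨rfl, hw, le_refl 1⟩]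
      rw [this, gF_zero]
      simp [fL]
    · have hcond : ¬ (epsW i w < phiL i a) := by
        by_cases h1 : a = i
        · subst h1
          have : epsW a w ≠ 0 := fun hx => hc ⟨rfl, hx⟩
          simp [phiL]; omega
        · simp [phiL, h1]
      rw [fW, if_neg hcond]
      have hphiw : 1 ≤ phiW i w := by
        have h1 := phiW_eq i w
        have h2 := epsW_eq i w
        have h3 := Dz_length i w
        have h4 := mDz_nonpos i w
        by_cases ha : a = i
        · subst ha
          have hε : epsW a w ≠ 0 := fun hx => hc ⟨rfl, hx⟩
          simp only [phiW, phiL, eq_self_iff_true, if_true] at h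
          omega
        · simp only [phiW, phiL, if_neg ha] at h
          omega
      rw [ih hphiw]
      have : gF i 1 (a :: w) = a :: gF i 1 w := by
        rw [gF, if_neg (by rintro ⟨h1, h2, -⟩; exact hc ⟨h1, h2⟩)]
      rw [this]
      rfl

lemma iter_fW (i k : ℕ) (x : List ℕ) (h : k ≤ phiW i x) :
    iterOpt (fW i) k x = some (gF i k x) := by
  induction k generalizing x with
  | zero => rw [iterOpt, gF_zero]
  | succ k ih =>
    rw [iterOpt, fW_eq i x (by omega)]
    have hφ : k ≤ phiW i (gF i 1 x) := by
      rw [phiW_gF i 1 x (by omega)]; omega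
    rw [Option.bind_some]
    rw [ih (gF i 1 x) hφ, gF_add]

/-- total function: `k`-fold application of `e_i`. -/
def gE (i : ℕ) : ℕ → List ℕ → List ℕ
  | _, [] => []
  | k, a :: w =>
    if a = i + 1 ∧ epsW i w < k then i :: gE i (k - 1) w
    else a :: gE i k w

@[simp] lemma gE_nil (i k : ℕ) : gE i k [] = [] := rfl

lemma gE_zero (i : ℕ) (x : List ℕ) : gE i 0 x = x := by
  induction x with
  | nil => rfl
  | cons a w ih => rw [gE, if_neg (by rintro ⟨-, h⟩; omega), ih]

lemma gE_length (i k : ℕ) (x : List ℕ) : (gE i k x).length = x.length := by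
  induction x generalizing k with
  | nil => rfl
  | cons a w ih => by_cases h : a = i + 1 ∧ epsW i w < k <;> simp [gE, h, ih]

lemma epsW_cons (i a : ℕ) (w : List ℕ) :
    (epsW i (a :: w) : ℤ) = max (epsL i a : ℤ) ((epsW i w : ℤ) + epsL i a - phiL i a) := by
  simp only [epsW]
  by_cases h1 : a = i
  · subst h1
    simp only [epsL, phiL, eq_self_iff_true, if_true,
      if_neg (show ¬ (a:ℕ) = a + 1 by omega)]
    omega
  · by_cases h2 : a = i + 1
    · subst h2
      simp only [epsL, phiL, eq_self_iff_true, if_true,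
        if_neg (show ¬ (i + 1 = i) by omega)]
      omega
    · simp only [epsL, phiL, if_neg h1, if_neg h2]
      omega

lemma epsW_gE (i k : ℕ) (x : List ℕ) (h : k ≤ epsW i x) :
    epsW i (gE i k x) = epsW i x - k := by
  induction x generalizing k with
  | nil =>
    simp only [epsW] at h
    simp only [gE_nil, epsW]
    omega
  | cons a w ih =>
    have hec := epsW_cons i a w
    by_cases hc : a = i + 1 ∧ epsW i w < k
    · obtain ⟨ha, hw⟩ := hc
      subst ha
      have hg : gE i k ((i+1) :: w) = i :: gE i (k - 1) w := by
        rw [gE, if_pos ⟨rfl, hw⟩]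
      have hx : epsW i ((i+1) :: w) = epsW i w + 1 := by
        have := epsW_cons i (i+1) w
        simp only [epsL, phiL, eq_self_iff_true, if_true,
          if_neg (show ¬ (i + 1 = i) by omega)] at this
        omega
      have hk : k = epsW i w + 1 := by rw [hx] at h; omega
      have hgw : epsW i (gE i (k-1) w) = 0 := by
        rw [ih (k-1) (by omega)]; omega
      rw [hg]
      have := epsW_cons i i (gE i (k-1) w)
      simp only [epsL, phiL, eq_self_iff_true, if_true,
        if_neg (show ¬ (i:ℕ) = i + 1 by omega)] at this
      omega
    · have hg : gE i k (a :: w) = a :: gE i k w := by rw [gE, if_neg hc]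
      rw [hg]
      have hgec : (epsW i (a :: gE i k w) : ℤ)
          = max (epsL i a : ℤ) ((epsW i (gE i k w) : ℤ) + epsL i a - phiL i a) :=
        epsW_cons i a (gE i k w)
      by_cases h1 : a = i + 1
      · have hw : k ≤ epsW i w := by
          rcases Nat.lt_or_ge (epsW i w) k with h2 | h2
          · exact absurd ⟨h1, h2⟩ hc
          · omega
        rw [ih k hw] at hgec
        subst h1
        simp only [epsL, phiL, eq_self_iff_true, if_true,
          if_neg (show ¬ (i + 1 = i) by omega)] at hgec hec
        omega
      · have hw : k ≤ epsW i w := by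
          by_cases h2 : a = i
          · subst h2
            simp only [epsL, phiL, eq_self_iff_true, if_true,
              if_neg (show ¬ (a:ℕ) = a + 1 by omega)] at hec
            omega
          · simp only [epsL, phiL, if_neg h1, if_neg h2] at hec
            omega
        rw [ih k hw] at hgec
        by_cases h2 : a = i
        · subst h2
          simp only [epsL, phiL, eq_self_iff_true, if_true,
            if_neg (show ¬ (a:ℕ) = a + 1 by omega)] at hgec hec
          omega
        · simp only [epsL, phiL, if_neg h1, if_neg h2] at hgec hec
          omega

section far
variable {i m : ℕ}

lemma mDz_gF_far (h1 : m ≠ i) (h2 : m ≠ i+1) (h3 : m+1 ≠ i) (h4 : m+1 ≠ i+1)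
    (k : ℕ) (x : List ℕ) : mDz i (gF m k x) = mDz i x := by
  induction x generalizing k with
  | nil => simp
  | cons a w ih =>
    by_cases hc : a = m ∧ epsW m w = 0 ∧ 1 ≤ k
    · have hg : gF m k (a :: w) = (m+1) :: gF m (k-1) w := by rw [gF, if_pos hc]
      rw [hg]
      simp only [mDz, ih, dlt_other h3 h4, hc.1, dlt_other h1 h2]
    · have hg : gF m k (a :: w) = a :: gF m k w := by rw [gF, if_neg hc]
      rw [hg]
      simp only [mDz, ih]

lemma mDz_gE_far (h1 : m ≠ i) (h2 : m ≠ i+1) (h3 : m+1 ≠ i) (h4 : m+1 ≠ i+1)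
    (k : ℕ) (x : List ℕ) : mDz i (gE m k x) = mDz i x := by
  induction x generalizing k with
  | nil => simp
  | cons a w ih =>
    by_cases hc : a = m + 1 ∧ epsW m w < k
    · have hg : gE m k (a :: w) = m :: gE m (k-1) w := by rw [gE, if_pos hc]
      rw [hg]
      simp only [mDz, ih, dlt_other h1 h2, hc.1, dlt_other h3 h4]
    · have hg : gE m k (a :: w) = a :: gE m k w := by rw [gE, if_neg hc]
      rw [hg]
      simp only [mDz, ih]

lemma epsW_gF_far (h1 : m ≠ i) (h2 : m ≠ i+1) (h3 : m+1 ≠ i) (h4 : m+1 ≠ i+1)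
    (k : ℕ) (x : List ℕ) : epsW i (gF m k x) = epsW i x := by
  have e1 := epsW_eq i (gF m k x)
  have e2 := epsW_eq i x
  rw [mDz_gF_far h1 h2 h3 h4] at e1
  omega

lemma epsW_gE_far (h1 : m ≠ i) (h2 : m ≠ i+1) (h3 : m+1 ≠ i) (h4 : m+1 ≠ i+1)
    (k : ℕ) (x : List ℕ) : epsW i (gE m k x) = epsW i x := by
  have e1 := epsW_eq i (gE m k x)
  have e2 := epsW_eq i x
  rw [mDz_gE_far h1 h2 h3 h4] at e1
  omega

end far

lemma gE_count_other (i k : ℕ) (x : List ℕ) (c : ℕ) (hc1 : c ≠ i) (hc2 : c ≠ i + 1)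
    (p : ℕ) : ((gE i k x).take p).count c = (x.take p).count c := by
  induction x generalizing k p with
  | nil => simp
  | cons a w ih =>
    cases p with
    | zero => simp
    | succ p =>
      by_cases h : a = i + 1 ∧ epsW i w < k
      · have hg : gE i k (a :: w) = i :: gE i (k - 1) w := by rw [gE, if_pos h]
        rw [hg]
        simp only [List.take_succ_cons, List.count_cons_of_ne (Ne.symm hc1),
          List.count_cons_of_ne (Ne.symm (h.1 ▸ hc2 : c ≠ a))]
        exact ih (k-1) p
      · have hg : gE i k (a :: w) = a :: gE i k w := by rw [gE, if_neg h]
        rw [hg]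
        simp only [List.take_succ_cons, List.count_cons]
        rw [ih k p]

lemma gE_add (i j k : ℕ) (x : List ℕ) (h : j + k ≤ epsW i x) :
    gE i j (gE i k x) = gE i (j + k) x := by
  induction x generalizing j k with
  | nil => simp
  | cons a w ih =>
    have hec := epsW_cons i a w
    by_cases hc : a = i + 1 ∧ epsW i w < k
    · have hx : epsW i (a :: w) = epsW i w + 1 := by
        rw [hc.1] at hec ⊢
        simp only [epsL, phiL, eq_self_iff_true, if_true,
          if_neg (show ¬ (i + 1 = i) by omega)] at hec
        omega
      have hj0 : j = 0 := by have := hc.2; omega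
      subst hj0
      rw [gE_zero, Nat.zero_add]
    · have hg : gE i k (a :: w) = a :: gE i k w := by rw [gE, if_neg hc]
      rw [hg]
      by_cases h1 : a = i + 1
      · have hkw : k ≤ epsW i w := by
          rcases Nat.lt_or_ge (epsW i w) k with h2 | h2
          · exact absurd ⟨h1, h2⟩ hc
          · omega
        have hx : epsW i (a :: w) = epsW i w + 1 := by
          rw [h1] at hec ⊢
          simp only [epsL, phiL, eq_self_iff_true, if_true,
            if_neg (show ¬ (i + 1 = i) by omega)] at hec
          omega
        have hgE : epsW i (gE i k w) = epsW i w - k := epsW_gE i k w hkw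
        by_cases h2 : epsW i (gE i k w) < j
        · have hga : gE i j (a :: gE i k w) = i :: gE i (j-1) (gE i k w) := by
            rw [gE, if_pos ⟨h1, h2⟩]
          have hj1 : 1 ≤ j := by omega
          have hgb : gE i (j + k) (a :: w) = i :: gE i (j + k - 1) w := by
            rw [gE, if_pos ⟨h1, by omega⟩]
          have heq : j + k - 1 = (j - 1) + k := by omega
          rw [hga, hgb, heq, ih (j-1) k (by omega)]
        · have hga : gE i j (a :: gE i k w) = a :: gE i j (gE i k w) := by
            rw [gE, if_neg (by rintro ⟨-, hz⟩; exact h2 hz)]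
          have hgb : gE i (j + k) (a :: w) = a :: gE i (j + k) w := by
            rw [gE, if_neg (by rintro ⟨-, hz⟩; omega)]
          rw [hga, hgb, ih j k (by omega)]
      · have hkw : j + k ≤ epsW i w := by
          by_cases h2 : a = i
          · rw [h2] at hec h
            simp only [epsL, phiL, eq_self_iff_true, if_true,
              if_neg (show ¬ (i:ℕ) = i + 1 by omega)] at hec
            omega
          · simp only [epsL, phiL, if_neg h1, if_neg h2] at hec
            omega
        have hga : gE i j (a :: gE i k w) = a :: gE i j (gE i k w) := by
          rw [gE, if_neg (by rintro ⟨hz, -⟩; exact h1 hz)]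
        have hgb : gE i (j + k) (a :: w) = a :: gE i (j + k) w := by
          rw [gE, if_neg (by rintro ⟨hz, -⟩; exact h1 hz)]
        rw [hga, hgb, ih j k hkw]

lemma eW_eq (i : ℕ) (x : List ℕ) (h : 1 ≤ epsW i x) : eW i x = some (gE i 1 x) := by
  induction x with
  | nil => simp [epsW] at h
  | cons a w ih =>
    have hec := epsW_cons i a w
    by_cases hc : a = i + 1 ∧ epsW i w = 0
    · obtain ⟨ha, hw⟩ := hc
      subst ha
      rw [eW, if_pos (by simp [phiL, hw])]
      have hg : gE i 1 ((i+1) :: w) = i :: gE i 0 w := by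
        rw [gE, if_pos ⟨rfl, by omega⟩]
      rw [hg, gE_zero]
      simp [eL]
    · have hcond : ¬ (epsW i w ≤ phiL i a) := by
        by_cases h1 : a = i + 1
        · have : epsW i w ≠ 0 := fun hz => hc ⟨h1, hz⟩
          rw [h1]
          simp only [phiL, if_neg (show ¬ (i + 1 = i) by omega)]
          omega
        · by_cases h2 : a = i
          · rw [h2] at hec h ⊢
            simp only [epsL, phiL, eq_self_iff_true, if_true,
              if_neg (show ¬ (i:ℕ) = i + 1 by omega)] at hec
            simp only [phiL, eq_self_iff_true, if_true]
            omega
          · simp only [epsL, phiL, if_neg h1, if_neg h2] at hec ⊢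
            omega
      rw [eW, if_neg hcond]
      have hεw : 1 ≤ epsW i w := by
        by_cases h1 : a = i + 1
        · have : epsW i w ≠ 0 := fun hz => hc ⟨h1, hz⟩
          omega
        · by_cases h2 : a = i
          · rw [h2] at hec h
            simp only [epsL, phiL, eq_self_iff_true, if_true,
              if_neg (show ¬ (i:ℕ) = i + 1 by omega)] at hec
            omega
          · simp only [epsL, phiL, if_neg h1, if_neg h2] at hec
            omega
      rw [ih hεw]
      have hg : gE i 1 (a :: w) = a :: gE i 1 w := by
        rw [gE, if_neg (by rintro ⟨h1, h2⟩; exact hc ⟨h1, by omega⟩)]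
      rw [hg]
      rfl

lemma iter_eW (i k : ℕ) (x : List ℕ) (h : k ≤ epsW i x) :
    iterOpt (eW i) k x = some (gE i k x) := by
  induction k generalizing x with
  | zero => rw [iterOpt, gE_zero]
  | succ k ih =>
    rw [iterOpt, eW_eq i x (by omega)]
    have hε : k ≤ epsW i (gE i 1 x) := by
      rw [epsW_gE i 1 x (by omega)]; omega
    rw [Option.bind_some, ih (gE i 1 x) hε, gE_add i k 1 x (by omega)]

section comm
variable {i m : ℕ}

lemma comm_FF (hfar : i + 2 ≤ m ∨ m + 2 ≤ i) (k1 k2 : ℕ) (x : List ℕ) :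
    gF i k1 (gF m k2 x) = gF m k2 (gF i k1 x) := by
  have hne1 : m ≠ i := by omega
  have hne2 : m ≠ i + 1 := by omega
  have hne3 : m + 1 ≠ i := by omega
  have hne4 : m + 1 ≠ i + 1 := by omega
  induction x generalizing k1 k2 with
  | nil => simp
  | cons a w ih =>
    by_cases hP : a = m ∧ epsW m w = 0 ∧ 1 ≤ k2
    · have hg : gF m k2 (a :: w) = (m+1) :: gF m (k2-1) w := by rw [gF, if_pos hP]
      have hg2 : gF i k1 ((m+1) :: gF m (k2-1) w) = (m+1) :: gF i k1 (gF m (k2-1) w) := by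
        rw [gF, if_neg (by rintro ⟨hz, -, -⟩; exact hne3 hz)]
      have hg3 : gF i k1 (a :: w) = a :: gF i k1 w := by
        rw [gF, if_neg (by rintro ⟨hz, -, -⟩; have := hP.1; omega)]
      have hg4 : gF m k2 (a :: gF i k1 w) = (m+1) :: gF m (k2-1) (gF i k1 w) := by
        rw [gF, if_pos ⟨hP.1, by
          rw [epsW_gF_far (by omega) (by omega) (by omega) (by omega)]
          exact hP.2.1, hP.2.2⟩]
      rw [hg, hg2, ih, hg3, hg4]
    · by_cases hQ : a = i ∧ epsW i w = 0 ∧ 1 ≤ k1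
      · have hg : gF m k2 (a :: w) = a :: gF m k2 w := by rw [gF, if_neg hP]
        have hg2 : gF i k1 (a :: gF m k2 w) = (i+1) :: gF i (k1-1) (gF m k2 w) := by
          rw [gF, if_pos ⟨hQ.1, by
            rw [epsW_gF_far hne1 hne2 hne3 hne4]
            exact hQ.2.1, hQ.2.2⟩]
        have hg3 : gF i k1 (a :: w) = (i+1) :: gF i (k1-1) w := by rw [gF, if_pos hQ]
        have hg4 : gF m k2 ((i+1) :: gF i (k1-1) w) = (i+1) :: gF m k2 (gF i (k1-1) w) := by
          rw [gF, if_neg (by rintro ⟨hz, -, -⟩; omega)]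
        rw [hg, hg2, ih, hg3, hg4]
      · have hg : gF m k2 (a :: w) = a :: gF m k2 w := by rw [gF, if_neg hP]
        have hg2 : gF i k1 (a :: gF m k2 w) = a :: gF i k1 (gF m k2 w) := by
          rw [gF, if_neg (by
            rintro ⟨h1, h2, h3⟩
            rw [epsW_gF_far hne1 hne2 hne3 hne4] at h2
            exact hQ ⟨h1, h2, h3⟩)]
        have hg3 : gF i k1 (a :: w) = a :: gF i k1 w := by rw [gF, if_neg hQ]
        have hg4 : gF m k2 (a :: gF i k1 w) = a :: gF m k2 (gF i k1 w) := by
          rw [gF, if_neg (by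
            rintro ⟨h1, h2, h3⟩
            rw [epsW_gF_far (by omega) (by omega) (by omega) (by omega)] at h2
            exact hP ⟨h1, h2, h3⟩)]
        rw [hg, hg2, ih, hg3, hg4]

lemma comm_FE (hfar : i + 2 ≤ m ∨ m + 2 ≤ i) (k1 k2 : ℕ) (x : List ℕ) :
    gF i k1 (gE m k2 x) = gE m k2 (gF i k1 x) := by
  have hne1 : m ≠ i := by omega
  have hne2 : m ≠ i + 1 := by omega
  have hne3 : m + 1 ≠ i := by omega
  have hne4 : m + 1 ≠ i + 1 := by omega
  induction x generalizing k1 k2 with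
  | nil => simp
  | cons a w ih =>
    by_cases hP : a = m + 1 ∧ epsW m w < k2
    · have hg : gE m k2 (a :: w) = m :: gE m (k2-1) w := by rw [gE, if_pos hP]
      have hg2 : gF i k1 (m :: gE m (k2-1) w) = m :: gF i k1 (gE m (k2-1) w) := by
        rw [gF, if_neg (by rintro ⟨hz, -, -⟩; exact hne1 hz)]
      have hg3 : gF i k1 (a :: w) = a :: gF i k1 w := by
        rw [gF, if_neg (by rintro ⟨hz, -, -⟩; have := hP.1; omega)]
      have hg4 : gE m k2 (a :: gF i k1 w) = m :: gE m (k2-1) (gF i k1 w) := by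
        rw [gE, if_pos ⟨hP.1, by
          rw [epsW_gF_far (by omega) (by omega) (by omega) (by omega)]
          exact hP.2⟩]
      rw [hg, hg2, ih, hg3, hg4]
    · by_cases hQ : a = i ∧ epsW i w = 0 ∧ 1 ≤ k1
      · have hg : gE m k2 (a :: w) = a :: gE m k2 w := by rw [gE, if_neg hP]
        have hg2 : gF i k1 (a :: gE m k2 w) = (i+1) :: gF i (k1-1) (gE m k2 w) := by
          rw [gF, if_pos ⟨hQ.1, by
            rw [epsW_gE_far hne1 hne2 hne3 hne4]
            exact hQ.2.1, hQ.2.2⟩]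
        have hg3 : gF i k1 (a :: w) = (i+1) :: gF i (k1-1) w := by rw [gF, if_pos hQ]
        have hg4 : gE m k2 ((i+1) :: gF i (k1-1) w) = (i+1) :: gE m k2 (gF i (k1-1) w) := by
          rw [gE, if_neg (by rintro ⟨hz, -⟩; omega)]
        rw [hg, hg2, ih, hg3, hg4]
      · have hg : gE m k2 (a :: w) = a :: gE m k2 w := by rw [gE, if_neg hP]
        have hg2 : gF i k1 (a :: gE m k2 w) = a :: gF i k1 (gE m k2 w) := by
          rw [gF, if_neg (by
            rintro ⟨h1, h2, h3⟩
            rw [epsW_gE_far hne1 hne2 hne3 hne4] at h2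
            exact hQ ⟨h1, h2, h3⟩)]
        have hg3 : gF i k1 (a :: w) = a :: gF i k1 w := by rw [gF, if_neg hQ]
        have hg4 : gE m k2 (a :: gF i k1 w) = a :: gE m k2 (gF i k1 w) := by
          rw [gE, if_neg (by
            rintro ⟨h1, h2⟩
            rw [epsW_gF_far (by omega) (by omega) (by omega) (by omega)] at h2
            exact hP ⟨h1, h2⟩)]
        rw [hg, hg2, ih, hg3, hg4]

lemma comm_EE (hfar : i + 2 ≤ m ∨ m + 2 ≤ i) (k1 k2 : ℕ) (x : List ℕ) :
    gE i k1 (gE m k2 x) = gE m k2 (gE i k1 x) := by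
  have hne1 : m ≠ i := by omega
  have hne2 : m ≠ i + 1 := by omega
  have hne3 : m + 1 ≠ i := by omega
  have hne4 : m + 1 ≠ i + 1 := by omega
  induction x generalizing k1 k2 with
  | nil => simp
  | cons a w ih =>
    by_cases hP : a = m + 1 ∧ epsW m w < k2
    · have hg : gE m k2 (a :: w) = m :: gE m (k2-1) w := by rw [gE, if_pos hP]
      have hg2 : gE i k1 (m :: gE m (k2-1) w) = m :: gE i k1 (gE m (k2-1) w) := by
        rw [gE, if_neg (by rintro ⟨hz, -⟩; exact hne2 hz)]
      have hg3 : gE i k1 (a :: w) = a :: gE i k1 w := by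
        rw [gE, if_neg (by rintro ⟨hz, -⟩; have := hP.1; omega)]
      have hg4 : gE m k2 (a :: gE i k1 w) = m :: gE m (k2-1) (gE i k1 w) := by
        rw [gE, if_pos ⟨hP.1, by
          rw [epsW_gE_far (by omega) (by omega) (by omega) (by omega)]
          exact hP.2⟩]
      rw [hg, hg2, ih, hg3, hg4]
    · by_cases hQ : a = i + 1 ∧ epsW i w < k1
      · have hg : gE m k2 (a :: w) = a :: gE m k2 w := by rw [gE, if_neg hP]
        have hg2 : gE i k1 (a :: gE m k2 w) = i :: gE i (k1-1) (gE m k2 w) := by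
          rw [gE, if_pos ⟨hQ.1, by
            rw [epsW_gE_far hne1 hne2 hne3 hne4]
            exact hQ.2⟩]
        have hg3 : gE i k1 (a :: w) = i :: gE i (k1-1) w := by rw [gE, if_pos hQ]
        have hg4 : gE m k2 (i :: gE i (k1-1) w) = i :: gE m k2 (gE i (k1-1) w) := by
          rw [gE, if_neg (by rintro ⟨hz, -⟩; omega)]
        rw [hg, hg2, ih, hg3, hg4]
      · have hg : gE m k2 (a :: w) = a :: gE m k2 w := by rw [gE, if_neg hP]
        have hg2 : gE i k1 (a :: gE m k2 w) = a :: gE i k1 (gE m k2 w) := by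
          rw [gE, if_neg (by
            rintro ⟨h1, h2⟩
            rw [epsW_gE_far hne1 hne2 hne3 hne4] at h2
            exact hQ ⟨h1, h2⟩)]
        have hg3 : gE i k1 (a :: w) = a :: gE i k1 w := by rw [gE, if_neg hQ]
        have hg4 : gE m k2 (a :: gE i k1 w) = a :: gE m k2 (gE i k1 w) := by
          rw [gE, if_neg (by
            rintro ⟨h1, h2⟩
            rw [epsW_gE_far (by omega) (by omega) (by omega) (by omega)] at h2
            exact hP ⟨h1, h2⟩)]
        rw [hg, hg2, ih, hg3, hg4]

end comm


/-- total version of the Weyl reflection `SiW`. -/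
def SiT (i : ℕ) (u : List ℕ) : List ℕ :=
  if u.count (i+1) ≤ u.count i then gF i (u.count i - u.count (i+1)) u
  else gE i (u.count (i+1) - u.count i) u

lemma SiW_eq (i : ℕ) (u : List ℕ) : SiW i u = some (SiT i u) := by
  rw [SiW, SiT]
  split_ifs with h
  · apply iter_fW
    have h1 := phiW_eq i u
    have h2 := mDz_nonpos i u
    have h3 := Dz_length i u
    omega
  · apply iter_eW
    have h1 := epsW_eq i u
    have h2 := mDz_le_D i u u.length
    have h3 := Dz_length i u
    omega

lemma SiT_length (i : ℕ) (u : List ℕ) : (SiT i u).length = u.length := by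
  rw [SiT]; split_ifs <;> [exact gF_length _ _ _; exact gE_length _ _ _]

lemma SiT_count_other {i c : ℕ} (hc1 : c ≠ i) (hc2 : c ≠ i + 1) (u : List ℕ) (p : ℕ) :
    ((SiT i u).take p).count c = (u.take p).count c := by
  rw [SiT]; split_ifs <;>
    [exact gF_count_other _ _ _ _ hc1 hc2 p; exact gE_count_other _ _ _ _ hc1 hc2 p]

lemma tcount_of_take {c : ℕ} {x y : List ℕ} (hlen : x.length = y.length)
    (h : (x.take x.length).count c = (y.take y.length).count c) : x.count c = y.count c := by
  rwa [List.take_length, List.take_length] at h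

lemma SiT_tcount_other {i c : ℕ} (hc1 : c ≠ i) (hc2 : c ≠ i + 1) (u : List ℕ) :
    (SiT i u).count c = u.count c := by
  apply tcount_of_take (SiT_length i u)
  rw [SiT_length]
  exact SiT_count_other hc1 hc2 u u.length

lemma SiT_comm {i m : ℕ} (hfar : i + 2 ≤ m ∨ m + 2 ≤ i) (u : List ℕ) :
    SiT i (SiT m u) = SiT m (SiT i u) := by
  have hne1 : (i:ℕ) ≠ m := by omega
  have hne2 : (i:ℕ) ≠ m + 1 := by omega
  have hne3 : i + 1 ≠ m := by omega
  have hne4 : i + 1 ≠ m + 1 := by omega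
  have hfar' : m + 2 ≤ i ∨ i + 2 ≤ m := hfar.symm
  have hci : ∀ v : List ℕ, (SiT m v).count i = v.count i := fun v =>
    SiT_tcount_other hne1 hne2 v
  have hci1 : ∀ v : List ℕ, (SiT m v).count (i+1) = v.count (i+1) := fun v =>
    SiT_tcount_other hne3 hne4 v
  have hcm : ∀ v : List ℕ, (SiT i v).count m = v.count m := fun v =>
    SiT_tcount_other (Ne.symm hne1) (Ne.symm hne3) v
  have hcm1 : ∀ v : List ℕ, (SiT i v).count (m+1) = v.count (m+1) := fun v =>
    SiT_tcount_other (Ne.symm hne2) (Ne.symm hne4) v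
  by_cases hm : u.count (m+1) ≤ u.count m <;> by_cases hi : u.count (i+1) ≤ u.count i
  · have e1 : SiT m u = gF m (u.count m - u.count (m+1)) u := by rw [SiT, if_pos hm]
    have e2 : SiT i u = gF i (u.count i - u.count (i+1)) u := by rw [SiT, if_pos hi]
    have l1 : SiT i (SiT m u) = gF i (u.count i - u.count (i+1)) (SiT m u) := by
      rw [SiT, hci, hci1, if_pos hi]
    have r1 : SiT m (SiT i u) = gF m (u.count m - u.count (m+1)) (SiT i u) := by
      rw [SiT, hcm, hcm1, if_pos hm]
    rw [l1, e1, r1, e2]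
    exact comm_FF hfar _ _ u
  · have e1 : SiT m u = gF m (u.count m - u.count (m+1)) u := by rw [SiT, if_pos hm]
    have e2 : SiT i u = gE i (u.count (i+1) - u.count i) u := by rw [SiT, if_neg hi]
    have l1 : SiT i (SiT m u) = gE i (u.count (i+1) - u.count i) (SiT m u) := by
      rw [SiT, hci, hci1, if_neg hi]
    have r1 : SiT m (SiT i u) = gF m (u.count m - u.count (m+1)) (SiT i u) := by
      rw [SiT, hcm, hcm1, if_pos hm]
    rw [l1, e1, r1, e2]
    exact (comm_FE hfar' _ _ u).symm
  · have e1 : SiT m u = gE m (u.count (m+1) - u.count m) u := by rw [SiT, if_neg hm]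
    have e2 : SiT i u = gF i (u.count i - u.count (i+1)) u := by rw [SiT, if_pos hi]
    have l1 : SiT i (SiT m u) = gF i (u.count i - u.count (i+1)) (SiT m u) := by
      rw [SiT, hci, hci1, if_pos hi]
    have r1 : SiT m (SiT i u) = gE m (u.count (m+1) - u.count m) (SiT i u) := by
      rw [SiT, hcm, hcm1, if_neg hm]
    rw [l1, e1, r1, e2]
    exact comm_FE hfar _ _ u
  · have e1 : SiT m u = gE m (u.count (m+1) - u.count m) u := by rw [SiT, if_neg hm]
    have e2 : SiT i u = gE i (u.count (i+1) - u.count i) u := by rw [SiT, if_neg hi]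
    have l1 : SiT i (SiT m u) = gE i (u.count (i+1) - u.count i) (SiT m u) := by
      rw [SiT, hci, hci1, if_neg hi]
    have r1 : SiT m (SiT i u) = gE m (u.count (m+1) - u.count m) (SiT i u) := by
      rw [SiT, hcm, hcm1, if_neg hm]
    rw [l1, e1, r1, e2]
    exact comm_EE hfar _ _ u

/-- total version of `applySeq`. -/
def TL : List ℕ → List ℕ → List ℕ
  | [], u => u
  | j :: t, u => SiT j (TL t u)

lemma applySeq_eq (L : List ℕ) (u : List ℕ) : applySeq L u = some (TL L u) := by
  induction L with
  | nil => rfl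
  | cons j t ih => rw [applySeq, ih, Option.bind_some, SiW_eq]; rfl

lemma TL_append (L1 L2 : List ℕ) (u : List ℕ) : TL (L1 ++ L2) u = TL L1 (TL L2 u) := by
  induction L1 with
  | nil => rfl
  | cons j t ih => simp [TL, ih]

lemma TL_count_far {s : ℕ} (L : List ℕ) (h : ∀ m ∈ L, s + 1 ≤ m) (u : List ℕ) (p : ℕ) :
    ((TL L u).take p).count s = ((u.take p)).count s := by
  induction L with
  | nil => rfl
  | cons j t ih =>
    have hj := h j (by simp)
    rw [TL, SiT_count_other (by omega) (by omega), ih (fun m hm => h m (by simp [hm]))]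

lemma TL_comm_far {i : ℕ} (L : List ℕ) (h : ∀ m ∈ L, i + 2 ≤ m) (u : List ℕ) :
    TL L (SiT i u) = SiT i (TL L u) := by
  induction L with
  | nil => rfl
  | cons j t ih =>
    rw [TL, ih (fun m hm => h m (by simp [hm])),
      SiT_comm (Or.inr (h j (by simp))), TL]

lemma gF_tcount_other (i k : ℕ) (x : List ℕ) (c : ℕ) (hc1 : c ≠ i) (hc2 : c ≠ i + 1) :
    (gF i k x).count c = x.count c := by
  apply tcount_of_take (gF_length i k x)
  rw [gF_length]
  exact gF_count_other i k x c hc1 hc2 x.length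

lemma Mz_le_D_self (i : ℕ) (x : List ℕ) (p : ℕ) : Mz i x p ≤ Dz i x p := by
  have := mDz_nonpos i (x.drop p)
  simp only [Mz]; omega

lemma local_key (s : ℕ) (q : List ℕ)
    (hQ1 : ∀ p, 0 ≤ Dz s q p) (hQ2 : ∀ p, 0 ≤ Dz (s+1) q p)
    (hc12 : q.count (s+1) = q.count (s+2)) (hle : q.count (s+1) ≤ q.count s) :
    (∀ p, 0 ≤ Dz s (SiT (s+1) (SiT s q)) p)
    ∧ (SiT (s+1) (SiT s q)).count s = q.count (s+1)
    ∧ (SiT (s+1) (SiT s q)).count (s+1) = q.count (s+2)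
    ∧ (∀ p, ((SiT (s+1) (SiT s q)).take p).count s ≤ (q.take p).count s) := by
  have hplus : s + 1 + 1 = s + 2 := by omega
  have hs1 : (s:ℕ) ≠ s + 1 := by omega
  have hs2 : (s:ℕ) ≠ s + 2 := by omega
  have hs3 : s + 2 ≠ s := by omega
  have hs4 : s + 2 ≠ s + 1 := by omega
  set d := q.count s - q.count (s+1) with hd
  have hmq : mDz s q = 0 := mDz_eq_zero _ _ hQ1
  have hmq2 : mDz (s+1) q = 0 := mDz_eq_zero _ _ hQ2
  have e1 : SiT s q = gF s d q := by rw [SiT, if_pos hle]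
  set q2 := gF s d q with hq2
  have hDlen : Dz s q q.length = (q.count s : ℤ) - q.count (s+1) := Dz_length s q
  have htc := gF_tcount s d q (by rw [hDlen, hmq]; push_cast; omega)
  have htco : q2.count (s+2) = q.count (s+2) := gF_tcount_other s d q (s+2) hs3 hs4
  -- prefix formulas for first application
  have hF1 : ∀ p, (((q2.take p).count (s+1) : ℤ)
        = ((q.take p).count (s+1) : ℤ) + min (d : ℤ) (Mz s q p))
      ∧ (((q2.take p).count s : ℤ)
        = ((q.take p).count s : ℤ) - min (d : ℤ) (Mz s q p)) := by
    intro p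
    have := gF_count s d q p
    rw [hmq] at this
    simpa using this
  have hm1_nonneg : ∀ p, 0 ≤ min (d : ℤ) (Mz s q p) := by
    intro p
    have := Mz_nonneg_of s q p hmq
    positivity
  have hF1o : ∀ p, (q2.take p).count (s+2) = (q.take p).count (s+2) :=
    fun p => gF_count_other s d q (s+2) hs3 hs4 p
  -- ε_{s+1} of q2 vanishes
  have hQ2' : ∀ p, 0 ≤ Dz (s+1) q2 p := by
    intro p
    have h1 := (hF1 p).1
    have h2 := hF1o p
    have h3 := hQ2 p
    have h4 := hm1_nonneg p
    simp only [Dz] at h3 ⊢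
    simp only [hplus] at *
    omega
  have hmq2' : mDz (s+1) q2 = 0 := mDz_eq_zero _ _ hQ2'
  -- second application
  have hq2c1 : (q2.count (s+1) : ℤ) = (q.count (s+1) : ℤ) + d := htc.1
  have hq2cs : (q2.count s : ℤ) = (q.count s : ℤ) - d := htc.2
  have hle2 : q2.count (s+2) ≤ q2.count (s+1) := by omega
  have hd2 : q2.count (s+1) - q2.count (s+2) = d := by omega
  have e2 : SiT (s+1) q2 = gF (s+1) d q2 := by
    rw [SiT, if_pos hle2, hd2]
  have hDlen2 : Dz (s+1) q2 q2.length = (q2.count (s+1) : ℤ) - q2.count (s+2) :=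
    Dz_length (s+1) q2
  have htc2 := gF_tcount (s+1) d q2 (by rw [hDlen2, hmq2']; omega)
  set w := gF (s+1) d q2 with hwdef
  have hF2 : ∀ p, (((w.take p).count (s+2) : ℤ)
        = ((q2.take p).count (s+2) : ℤ) + min (d : ℤ) (Mz (s+1) q2 p))
      ∧ (((w.take p).count (s+1) : ℤ)
        = ((q2.take p).count (s+1) : ℤ) - min (d : ℤ) (Mz (s+1) q2 p)) := by
    intro p
    have := gF_count (s+1) d q2 p
    rw [hmq2'] at this
    simpa using this
  have hF2o : ∀ p, (w.take p).count s = (q2.take p).count s :=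
    fun p => gF_count_other (s+1) d q2 s hs1 hs2 p
  -- the key inequality : the second-stage change dominates the first-stage change
  have hkey : ∀ p, min (d : ℤ) (Mz s q p) ≤ min (d : ℤ) (Mz (s+1) q2 p) := by
    intro p
    have hMge : min (d : ℤ) (Mz s q p) ≤ Mz (s+1) q2 p := by
      apply Mz_ge_of
      intro r
      have h1 := (hF1 (p + r)).1
      have h2 := hF1o (p + r)
      have h3 := hQ2 (p + r)
      have hmono : Mz s q p ≤ Mz s q (p + r) := Mz_mono s q p r
      simp only [Dz] at h3 ⊢
      simp only [hplus] at *
      omega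
    omega
  constructor
  · intro p
    have h1 := (hF1 p).2
    have h2 := (hF2 p).2
    have h3 := (hF1 p).1
    have h4 := hF2o p
    have h5 := hkey p
    have h6 := hQ1 p
    have h7 : Mz s q p ≤ Dz s q p := Mz_le_D_self s q p
    have h8 := hm1_nonneg p
    rw [e1, e2]
    simp only [Dz] at h6 h7 ⊢
    simp only [hplus] at *
    omega
  refine ⟨?_, ?_, ?_⟩
  · rw [e1, e2]
    have hws := gF_tcount_other (s+1) d q2 s hs1 hs2
    rw [← hwdef] at hws
    simp only [hplus] at *
    omega
  · rw [e1, e2]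
    have h1 := htc2.2
    simp only [hplus] at *
    omega
  · intro p
    have h1 := (hF1 p).2
    have h2 := hF2o p
    have h3 := hm1_nonneg p
    rw [e1, e2]
    simp only [hplus] at *
    omega

lemma range_map_succ (n c : ℕ) :
    (List.range (n+1)).map (· + c) = c :: (List.range n).map (· + (c+1)) := by
  rw [List.range_succ_eq_map, List.map_cons, List.map_map]
  congr 1
  · omega
  · apply List.map_congr_left
    intro x _
    simp [Nat.succ_eq_add_one]
    omega

lemma map_add_add (L : List ℕ) (a b : ℕ) :
    (L.map (· + a)).map (· + b) = L.map (· + (b + a)) := by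
  rw [List.map_map]
  apply List.map_congr_left
  intro x _
  simp
  omega

lemma ML (j : ℕ) : ∀ (s : ℕ) (u : List ℕ),
    (∀ m, s ≤ m → ∀ p, 0 ≤ Dz m u p) →
    (∀ m, m < j → u.count (s + j) < u.count (s + m)) →
    u.count (s + j) = u.count (s + j + 1) →
    (∀ p, 0 ≤ Dz s (TL ((wiList (j + 1)).map (· + s)) u) p)
    ∧ (TL ((wiList (j + 1)).map (· + s)) u).count s = u.count (s + j + 1)
    ∧ (TL ((wiList (j + 1)).map (· + s)) u).count (s + 1) = u.count (s + j + 1)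
    ∧ (∀ p, ((TL ((wiList (j + 1)).map (· + s)) u).take p).count s ≤ (u.take p).count s) := by
  induction j with
  | zero =>
    intro s u H1 _H2 H3
    have hnil : (wiList 1).map (· + s) = [] := by simp [wiList]
    rw [hnil]
    simp only [TL]
    refine ⟨H1 s le_rfl, ?_, ?_, fun p => le_rfl⟩
    · simp only [Nat.add_zero] at H3 ⊢
      omega
    · simp only [Nat.add_zero]
  | succ j ih =>
    intro s u H1 H2 H3
    -- instantiate the inductive hypothesis at level s+1
    have H1' : ∀ m, s + 1 ≤ m → ∀ p, 0 ≤ Dz m u p := fun m hm => H1 m (by omega)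
    have H2' : ∀ m, m < j → u.count (s + 1 + j) < u.count (s + 1 + m) := by
      intro m hm
      have := H2 (m + 1) (by omega)
      have e1 : s + (j + 1) = s + 1 + j := by omega
      have e2 : s + (m + 1) = s + 1 + m := by omega
      rwa [e1, e2] at this
    have H3' : u.count (s + 1 + j) = u.count (s + 1 + j + 1) := by
      have e1 : s + (j + 1) = s + 1 + j := by omega
      rw [← e1]
      exact H3
    obtain ⟨ha', hb1', hb2', hc'⟩ := ih (s+1) u H1' H2' H3'
    set w1 := TL ((wiList (j + 1)).map (· + (s + 1))) u with hw1
    -- decomposition of the level-s chain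
    have hM2M1 : (wiList (j + 1)).map (· + (s + 1))
        = (List.range j).map (· + (s + 2)) ++ (List.range j).map (· + (s + 1)) := by
      rw [wiList]
      simp only [Nat.add_sub_cancel, List.map_append]
      rw [map_add_add]
    have hdec : TL ((wiList (j + 1 + 1)).map (· + s)) u = SiT (s+1) (SiT s w1) := by
      have hw : (wiList (j + 2)).map (· + s)
          = (List.range (j+1)).map (· + (s + 1)) ++ (List.range (j+1)).map (· + s) := by
        rw [wiList]
        have e : j + 2 - 1 = j + 1 := by omega
        rw [e, List.map_append, map_add_add]
      have e0 : j + 1 + 1 = j + 2 := by omega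
      rw [e0, hw, TL_append, range_map_succ, range_map_succ]
      have e1 : s + 1 + 1 = s + 2 := by omega
      rw [e1]
      show SiT (s+1) (TL ((List.range j).map (· + (s + 2)))
          (SiT s (TL ((List.range j).map (· + (s + 1))) u))) = _
      rw [TL_comm_far _ (by intro m hm; simp at hm; omega),
        ← TL_append, ← hM2M1]
    -- properties of w1 needed for the local lemma
    have hwcnt_s : ∀ p, (w1.take p).count s = (u.take p).count s := by
      intro p
      apply TL_count_far
      intro m hm
      simp [wiList] at hm
      omega
    have hQ1 : ∀ p, 0 ≤ Dz s w1 p := by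
      intro p
      have h1 := hc' p
      have h2 := H1 s le_rfl p
      have h3 := hwcnt_s p
      simp only [Dz] at h2 ⊢
      omega
    have hc12 : w1.count (s+1) = w1.count (s+2) := by
      have e : s + 1 + 1 = s + 2 := by omega
      rw [← e]
      omega
    have hle : w1.count (s+1) ≤ w1.count s := by
      have hcnt : w1.count s = u.count s := by
        have := hwcnt_s (max w1.length u.length)
        rwa [List.take_of_length_le (by omega), List.take_of_length_le (by omega)] at this
      have h0 := H2 0 (by omega)
      simp only [Nat.add_zero] at h0
      have hb := hb1'
      have e : s + 1 + j + 1 = s + (j + 1) + 1 := by omega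
      rw [e] at hb
      omega
    obtain ⟨la, lb1, lb2, lc⟩ := local_key s w1 hQ1 ha' hc12 hle
    rw [hdec]
    refine ⟨la, ?_, ?_, ?_⟩
    · rw [lb1, hc12]
      have e : s + 1 + 1 = s + 2 := by omega
      rw [← e, hb2']
      congr 1
      omega
    · rw [lb2]
      have e : s + 1 + 1 = s + 2 := by omega
      rw [← e, hb2']
      congr 1
      omega
    · intro p
      have h1 := lc p
      have h2 := hwcnt_s p
      omega

lemma count_take_drop (c : ℕ) (v : List ℕ) (p : ℕ) :
    (v.take p).count c + (v.drop p).count c = v.count c := by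
  conv_rhs => rw [← List.take_append_drop p v]
  rw [List.count_append]

lemma ebar_some (v : List ℕ) (hsuf : ∀ p, ((v.drop p).count 0) ≤ (v.drop p).count 1)
    (hpos : 0 < v.count 1) : ∃ y, ebarW v = some y := by
  induction v with
  | nil => simp at hpos
  | cons a w ih =>
    by_cases hw : w.count 0 = 0 ∧ w.count 1 = 0
    · have ha : a = 1 := by
        by_contra hne
        rw [List.count_cons_of_ne hne] at hpos
        omega
      subst ha
      refine ⟨0 :: w, ?_⟩
      rw [ebarW, if_pos hw]
      simp
    · have hsw : ∀ p, (w.drop p).count 0 ≤ (w.drop p).count 1 := by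
        intro p
        have := hsuf (p+1)
        simpa using this
      have hw1 : 0 < w.count 1 := by
        have h0 := hsw 0
        simp only [List.drop_zero] at h0
        omega
      obtain ⟨y, hy⟩ := ih hsw hw1
      refine ⟨a :: y, ?_⟩
      rw [ebarW, if_neg hw, hy]
      rfl

end QProof

open QWord QProof

/-- if `b` is a highest weight vector in the `q(n)`-crystal
`𝐁^{⊗N}` (all letters `< n`, killed by all even operators `eᵢ` and all odd
operators `ēᵢ`), then `wt b` — the vector of letter multiplicities — is a
strict partition: `λ₁ > λ₂ > ⋯ > λ_r > 0 = λ_{r+1} = ⋯ = λ_n`, i.e. each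
nonzero entry is strictly smaller than its predecessor. -/
theorem stmt_9 (n : ℕ) (b : List ℕ) (hletters : ∀ a ∈ b, a < n)
    (he : ∀ i, i + 1 < n → eW i b = none)
    (hebar : ∀ i, i + 1 < n → ebarWi i b = none) :
    ∀ j, j + 1 < n → 0 < b.count (j + 1) → b.count (j + 1) < b.count j := by
  intro j0 hj0 hpos
  by_contra hlt
  push_neg at hlt
  -- lattice facts, for every index
  have hlat : ∀ m p, 0 ≤ Dz m b p := by
    intro m
    by_cases hm : m + 1 < n
    · have hz : epsW m b = 0 := by
        by_contra hz
        have h1 := eW_eq m b (by omega)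
        rw [he m hm] at h1
        cases h1
      intro p
      have h1 := epsW_eq m b
      have h2 := mDz_le_D m b p
      omega
    · intro p
      have hc : (b.take p).count (m+1) = 0 := by
        rw [List.count_eq_zero]
        intro hmem
        have := hletters _ (List.take_subset p b hmem)
        omega
      simp only [Dz, hc, Nat.cast_zero, sub_zero]
      positivity
  have hstep : ∀ m, b.count (m+1) ≤ b.count m := by
    intro m
    have h1 := hlat m b.length
    have h2 := Dz_length m b
    omega
  have hanti : ∀ m m', m ≤ m' → b.count m' ≤ b.count m := by
    intro m m'
    induction m' with
    | zero =>
      intro hle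
      have hm0 : m = 0 := by omega
      subst hm0
      exact le_rfl
    | succ k ihk =>
      intro hle
      rcases Nat.lt_or_ge m (k+1) with h | h
      · exact le_trans (hstep k) (ihk (by omega))
      · have : m = k + 1 := by omega
        subst this
        exact le_rfl
  have hP0 : 0 < b.count (j0+1) ∧ b.count j0 = b.count (j0+1) :=
    ⟨hpos, le_antisymm hlt (hstep j0)⟩
  have hex : ∃ k, 0 < b.count (k+1) ∧ b.count k = b.count (k+1) := ⟨j0, hP0⟩
  set j := Nat.find hex with hjdef
  have hPfind : 0 < b.count (j + 1) ∧ b.count j = b.count (j + 1) := Nat.find_spec hex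
  have hjle : j ≤ j0 := Nat.find_min' hex hP0
  have hstrict : ∀ m, m < j → b.count j < b.count m := by
    intro m hm
    have h1 : b.count j ≤ b.count m := hanti m j (by omega)
    rcases Nat.lt_or_ge (b.count j) (b.count m) with h | h
    · exact h
    · exfalso
      have heq : b.count m = b.count j := by omega
      have h2 : b.count (m+1) ≤ b.count m := hstep m
      have h3 : b.count j ≤ b.count (m+1) := hanti (m+1) j (by omega)
      have hPm : 0 < b.count (m+1) ∧ b.count m = b.count (m+1) := by
        constructor
        · have := hPfind.1
          have := hPfind.2
          omega
        · omega
      exact Nat.find_min hex hm hPm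
  have hml := ML j 0 b (fun m _ => hlat m)
    (by intro m hm; simpa using hstrict m hm)
    (by simpa using hPfind.2)
  have hmap : (wiList (j+1)).map (· + 0) = wiList (j+1) := by simp
  rw [hmap] at hml
  obtain ⟨hva, hvb1, hvb2, -⟩ := hml
  set v := TL (wiList (j+1)) b with hvdef
  simp only [Nat.zero_add] at hvb1 hvb2
  have hsuf : ∀ p, (v.drop p).count 0 ≤ (v.drop p).count 1 := by
    intro p
    have h1 := hva p
    have h2 := count_take_drop 0 v p
    have h3 := count_take_drop 1 v p
    simp only [Dz, Nat.zero_add] at h1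
    omega
  have hpos1 : 0 < v.count 1 := by
    have := hPfind.1
    omega
  obtain ⟨y, hy⟩ := ebar_some v hsuf hpos1
  have hnone := hebar j (by omega)
  rw [ebarWi, applySeq_eq, Option.bind_some, ← hvdef, hy, Option.bind_some,
    applySeq_eq] at hnone
  cases hnone
end

section
/- Let b be a word in B^{⊗N} (letters 1,...,n) with ε_1(b) = 0 (i.e., e_1 b = 0) whose weight has equal positive first and second coordinates: ⟨k_1, wt b⟩ = ⟨k_2, wt b⟩ > 0. Then ē_1 b ≠ 0. -/
open QWord

lemma epsW_eq_zero_of_eW_none (i : ℕ) : ∀ b, eW i b = none → epsW i b = 0 := by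
  intro b
  induction b with
  | nil => intro _; rfl
  | cons a w ih =>
    intro h
    rw [eW] at h
    split_ifs at h with hc
    · rw [Option.map_eq_none_iff] at h
      have ha : epsL i a = 0 := by
        unfold eL at h; unfold epsL
        split_ifs at h ⊢
        simp_all
      rw [epsW, ha]
      omega
    · have := ih (by simpa using h)
      omega

lemma ebarW_ne_none_aux : ∀ (b : List ℕ) (k : ℕ), epsW 0 b ≤ k →
    b.count 1 = b.count 0 + k → (0 < b.count 0 ∨ 0 < k) → ebarW b ≠ none := by
  intro b
  induction b with
  | nil => intro k _ h2 h3; simp at h2 h3; omega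
  | cons a w ih =>
    intro k h1 h2 h3
    rw [ebarW]
    rcases a with _ | _ | m
    · -- letter 0 at the head
      rw [epsW] at h1
      simp only [epsL, phiL] at h1
      norm_num at h1
      simp only [List.count_cons] at h2
      norm_num at h2
      by_cases hc : w.count 0 = 0 ∧ w.count 1 = 0
      · rw [if_pos hc]
        omega
      · rw [if_neg hc]
        simp only [ne_eq, Option.map_eq_none_iff]
        exact ih (k + 1) (by omega) (by omega) (Or.inr (Nat.succ_pos _))
    · -- letter 1 at the head
      rw [epsW] at h1
      simp only [epsL, phiL] at h1
      norm_num at h1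
      simp only [List.count_cons] at h2
      norm_num at h2
      by_cases hc : w.count 0 = 0 ∧ w.count 1 = 0
      · rw [if_pos hc]
        simp
      · rw [if_neg hc]
        simp only [ne_eq, Option.map_eq_none_iff]
        by_cases hz : 0 < w.count 0 ∨ 0 < k - 1
        · exact ih (k - 1) (by omega) (by omega) hz
        · push_neg at hz
          exact absurd ⟨by omega, by omega⟩ hc
    · -- letter ≥ 2 at the head
      have hE : epsL 0 (m + 1 + 1) = 0 := by rw [epsL, if_neg (by omega)]
      have hP : phiL 0 (m + 1 + 1) = 0 := by rw [phiL, if_neg (by omega)]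
      rw [epsW, hE, hP] at h1
      simp only [Nat.add_zero, Nat.sub_zero, Nat.max_le] at h1
      simp only [List.count_cons, beq_iff_eq] at h2 h3
      rw [if_neg (by omega), if_neg (by omega)] at h2
      rw [if_neg (by omega)] at h3
      simp only [Nat.add_zero] at h2 h3
      by_cases hc : w.count 0 = 0 ∧ w.count 1 = 0
      · rw [if_pos hc]
        omega
      · rw [if_neg hc]
        simp only [ne_eq, Option.map_eq_none_iff]
        exact ih k (by omega) (by omega) h3

/-- if a word `b` satisfies `ε₁(b) = 0` (i.e. `e₁ b = 0`) and its
weight has equal positive first and second coordinates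
(`⟨k₁, wt b⟩ = ⟨k₂, wt b⟩ > 0`, i.e. equally many letters `1` and `2`, here
`0` and `1`), then `ē₁ b ≠ 0`. -/
theorem stmt_10 (b : List ℕ) (h1 : eW 0 b = none)
    (h2 : b.count 0 = b.count 1) (h3 : 0 < b.count 0) :
    ebarW b ≠ none := by
  have he := epsW_eq_zero_of_eW_none 0 b h1
  exact ebarW_ne_none_aux b 0 (by omega) (by omega) (Or.inl h3)
end

section
/- For a strict partition λ = (λ_1 > λ_2 > ... > λ_r > 0), the shifted skew Young diagram Y_λ (with λ_1 boxes on the main diagonal, λ_2 on the second diagonal, etc.) has a unique semistandard tableau of weight λ with entries in {1,...,n} (n ≥ r), and its weight λ is maximal in the set of weights of all semistandard tableaux of shape Y_λ, i.e., λ + α_i is not a weight for any simple root α_i. -/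
/-!
For a strict partition `λ = (λ₁ > ⋯ > λ_r > 0)` (here a function
`lam : ℕ → ℕ`, `0`-based), the skew Young diagram `Y_λ` has `λ_k` boxes on its
`k`-th diagonal.  We coordinatize the boxes of `Y_λ` by pairs `(t, s)`
(`0`-based): box `(t, s)` is the `s`-th box of the `t`-th diagonal; it sits in
row `t + s` and, moving one step to the right along a row, `(t, s+1)` is
replaced by `(t+1, s)`; the box directly below `(t, s)` is `(t+1, s)`... more
precisely `(t, s)` and `(t+1, s)` share a column, with `(t+1, s)` one row
lower, and `(t, s+1)` and `(t+1, s)` share a row, with `(t+1, s)` one column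
further right.  Entries are `0`-based: entry `j` stands for the letter `j+1`.
-/

/-- A semistandard tableau of shape `Y_lam` with entries in `{0, …, n-1}`:
rows weakly increase (left to right) and columns strictly increase (downwards). -/
def IsSSYT (n : ℕ) (lam : ℕ → ℕ) (T : ℕ → ℕ → ℕ) : Prop :=
  (∀ t s, s < lam t → T t s < n) ∧
  (∀ t s, s + 1 < lam t → s < lam (t + 1) → T t (s + 1) ≤ T (t + 1) s) ∧
  (∀ t s, s < lam t → s < lam (t + 1) → T t s < T (t + 1) s)

/-- The weight of a tableau: `wtT r lam T j` is the number of boxes of `Y_lam`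
(whose diagonals are indexed by `t < r`) with entry `j`. -/
def wtT (r : ℕ) (lam : ℕ → ℕ) (T : ℕ → ℕ → ℕ) (j : ℕ) : ℕ :=
  ∑ t ∈ Finset.range r, ((Finset.range (lam t)).filter (fun s => T t s = j)).card

lemma wt_sum (r : ℕ) (lam : ℕ → ℕ) (T : ℕ → ℕ → ℕ) (m : ℕ) :
    ∑ j ∈ Finset.range m, wtT r lam T j
      = ∑ t ∈ Finset.range r,
          ((Finset.range (lam t)).filter (fun s => T t s < m)).card := by
  unfold wtT
  rw [Finset.sum_comm]
  refine Finset.sum_congr rfl fun t _ => ?_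
  rw [Finset.card_eq_sum_card_fiberwise (f := T t) (t := Finset.range m)
      (fun x hx => by simp at hx ⊢; omega)]
  refine Finset.sum_congr rfl fun j hj => ?_
  simp only [Finset.mem_range] at hj
  congr 1
  ext s
  simp only [Finset.mem_filter, Finset.mem_range]
  omega

lemma ssyt_ge (r : ℕ) (lam : ℕ → ℕ) (T : ℕ → ℕ → ℕ)
    (hstrict : ∀ t, t + 1 < r → lam (t + 1) < lam t)
    (hzero : ∀ t, r ≤ t → lam t = 0)
    (hcol : ∀ t s, s < lam t → s < lam (t + 1) → T t s < T (t + 1) s) :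
    ∀ t s, s < lam t → t ≤ T t s := by
  intro t
  induction t with
  | zero => exact fun s _ => Nat.zero_le _
  | succ t ih =>
    intro s hs
    have hr : t + 1 < r := by
      by_contra h
      push_neg at h
      rw [hzero _ h] at hs; omega
    have hlt := hstrict t hr
    have h1 := ih s (by omega)
    have h2 := hcol t s (by omega) hs
    omega

/-- for a strict partition `λ` with `r` parts and `n ≥ r`:
(1) the tableau whose `t`-th diagonal is filled with the entry `t` is a
semistandard tableau of shape `Y_λ` and weight `λ`; (2) it is the unique such
tableau (any two agree on all boxes); (3) no semistandard tableau of shape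
`Y_λ` has weight `λ + αᵢ = λ + εᵢ - ε_{i+1}` for any simple root `αᵢ`. -/
theorem stmt_12 (r n : ℕ) (hrn : r ≤ n) (lam : ℕ → ℕ)
    (hpos : ∀ t, t < r → 0 < lam t)
    (hstrict : ∀ t, t + 1 < r → lam (t + 1) < lam t)
    (hzero : ∀ t, r ≤ t → lam t = 0) :
    (IsSSYT n lam (fun t _ => t) ∧ ∀ j, wtT r lam (fun t _ => t) j = lam j) ∧
    (∀ T T', IsSSYT n lam T → IsSSYT n lam T' →
      (∀ j, wtT r lam T j = lam j) → (∀ j, wtT r lam T' j = lam j) →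
      ∀ t s, s < lam t → T t s = T' t s) ∧
    (∀ (T : ℕ → ℕ → ℕ) (i : ℕ), IsSSYT n lam T → i + 1 < n →
      ¬ (wtT r lam T i = lam i + 1 ∧ wtT r lam T (i + 1) + 1 = lam (i + 1) ∧
          ∀ j, j ≠ i → j ≠ i + 1 → wtT r lam T j = lam j)) := by
  -- a box on diagonal t exists only if t < r
  have hdiag : ∀ t s : ℕ, s < lam t → t < r := by
    intro t s hs
    by_contra h
    push_neg at h
    rw [hzero _ h] at hs; omega
  refine ⟨⟨⟨?_, ?_, ?_⟩, ?_⟩, ?_, ?_⟩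
  · intro t s hs
    exact lt_of_lt_of_le (hdiag t s hs) hrn
  · intro t s _ _; exact Nat.le_succ t
  · intro t s _ _; exact Nat.lt_succ_self t
  · -- weight of the canonical tableau
    intro j
    unfold wtT
    have : ∀ t ∈ Finset.range r,
        ((Finset.range (lam t)).filter (fun s => (fun t _ => t) t s = j)).card
          = if t = j then lam t else 0 := by
      intro t _
      split_ifs with h
      · simp [h]
      · simp [h]
    rw [Finset.sum_congr rfl this, Finset.sum_ite_eq' (Finset.range r) j lam]
    split_ifs with h
    · rfl
    · simp only [Finset.mem_range, not_lt] at h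
      exact (hzero j h).symm
  · -- uniqueness
    have key : ∀ T, IsSSYT n lam T → (∀ j, wtT r lam T j = lam j) →
        ∀ t s, s < lam t → T t s = t := by
      intro T hT hw t s hs
      have htr : t < r := hdiag t s hs
      have hge := ssyt_ge r lam T hstrict hzero hT.2.2
      have h1 : ∑ j ∈ Finset.range (t + 1), wtT r lam T j
          = ∑ j ∈ Finset.range (t + 1), lam j :=
        Finset.sum_congr rfl fun j _ => hw j
      rw [wt_sum] at h1
      have hsub : Finset.range (t + 1) ⊆ Finset.range r :=
        Finset.range_subset_range.2 (by omega)
      have h2 : ∑ t' ∈ Finset.range r,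
            ((Finset.range (lam t')).filter (fun s => T t' s < t + 1)).card
          = ∑ t' ∈ Finset.range (t + 1),
            ((Finset.range (lam t')).filter (fun s => T t' s < t + 1)).card := by
        refine (Finset.sum_subset hsub fun x _ hx => ?_).symm
        simp only [Finset.mem_range, not_lt] at hx
        rw [Finset.card_eq_zero, Finset.filter_eq_empty_iff]
        intro s' hs'
        simp only [Finset.mem_range] at hs'
        have := hge x s' hs'
        omega
      rw [h2] at h1
      have hle : ∀ t' ∈ Finset.range (t + 1),
          ((Finset.range (lam t')).filter (fun s => T t' s < t + 1)).card ≤ lam t' := by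
        intro t' _
        calc ((Finset.range (lam t')).filter (fun s => T t' s < t + 1)).card
            ≤ (Finset.range (lam t')).card := Finset.card_filter_le _ _
          _ = lam t' := Finset.card_range _
      have heach := (Finset.sum_eq_sum_iff_of_le hle).1 h1 t
        (Finset.self_mem_range_succ t)
      have hfull : (Finset.range (lam t)).filter (fun s => T t s < t + 1)
          = Finset.range (lam t) := by
        apply Finset.eq_of_subset_of_card_le (Finset.filter_subset _ _)
        rw [heach, Finset.card_range]
      have hmem : s ∈ (Finset.range (lam t)).filter (fun s => T t s < t + 1) := by
        rw [hfull]; exact Finset.mem_range.2 hs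
      have hlt := (Finset.mem_filter.1 hmem).2
      have := hge t s hs
      omega
    intro T T' hT hT' hw hw' t s hs
    rw [key T hT hw t s hs, key T' hT' hw' t s hs]
  · -- maximality
    rintro T i hT hin ⟨h1, h2, h3⟩
    have hge := ssyt_ge r lam T hstrict hzero hT.2.2
    have hsum : ∑ j ∈ Finset.range (i + 1), wtT r lam T j
        = (∑ j ∈ Finset.range (i + 1), lam j) + 1 := by
      rw [Finset.sum_range_succ, Finset.sum_range_succ]
      have : ∑ j ∈ Finset.range i, wtT r lam T j = ∑ j ∈ Finset.range i, lam j := by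
        refine Finset.sum_congr rfl fun j hj => ?_
        simp only [Finset.mem_range] at hj
        exact h3 j (by omega) (by omega)
      omega
    rw [wt_sum] at hsum
    have hub : ∑ t' ∈ Finset.range r,
          ((Finset.range (lam t')).filter (fun s => T t' s < i + 1)).card
        ≤ ∑ t' ∈ Finset.range (i + 1), lam t' := by
      calc ∑ t' ∈ Finset.range r,
            ((Finset.range (lam t')).filter (fun s => T t' s < i + 1)).card
          ≤ ∑ t' ∈ Finset.range r, (if t' < i + 1 then lam t' else 0) := by
            refine Finset.sum_le_sum fun t' _ => ?_
            split_ifs with h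
            · calc ((Finset.range (lam t')).filter (fun s => T t' s < i + 1)).card
                  ≤ (Finset.range (lam t')).card := Finset.card_filter_le _ _
                _ = lam t' := Finset.card_range _
            · rw [Nat.le_zero, Finset.card_eq_zero, Finset.filter_eq_empty_iff]
              intro s' hs'
              simp only [Finset.mem_range] at hs'
              have := hge t' s' hs'
              omega
        _ = ∑ t' ∈ (Finset.range r).filter (fun t' => t' < i + 1), lam t' :=
            (Finset.sum_filter _ _).symm
        _ ≤ ∑ t' ∈ Finset.range (i + 1), lam t' := by
            refine Finset.sum_le_sum_of_subset fun x hx => ?_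
            simp only [Finset.mem_filter, Finset.mem_range] at hx ⊢
            exact hx.2
    omega
end

section
/- In B^{⊗N} with letters {1,...,n}, let b be a gl(n)-highest weight word (e_i b = 0 for all i) of weight μ (a partition), and let j be such that μ + ε_j is a partition. Write b_0 = 1 ⊗ f_1 f_2 ⋯ f_{j-1} b. Then b_0 is a gl(n)-highest weight word of weight μ + ε_j, and every gl(n)-highest weight word in {1} ⊗ B^{⊗N} ⊂ B^{⊗(N+1)} prepending a letter arises this way; that is, a word 1 ⊗ b' ∈ B^{⊗(N+1)} is gl(n)-highest weight if and only if b' = f_1 ⋯ f_{j-1} b for some gl(n)-highest weight word b and some j with wt(b) + ε_j a partition. -/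
open QWord

/-- `fseq j b = f₁ f₂ ⋯ f_j b` (in `0`-based indices `f₀ f₁ ⋯ f_{j-1} b`,
applying `f_{j-1}` first). -/
def fseq : ℕ → List ℕ → Option (List ℕ)
  | 0, b => some b
  | k + 1, b => (fW k b).bind (fseq k)

namespace Stmt19

open QWord

lemma succ_ne (m : ℕ) : m + 1 ≠ m := by omega
lemma ne_succ (m : ℕ) : m ≠ m + 1 := by omega

lemma epsW_nil (i : ℕ) : epsW i [] = 0 := rfl

lemma epsW_cons (i a : ℕ) (w : List ℕ) :
    epsW i (a :: w) = max (epsL i a) (epsW i w + epsL i a - phiL i a) := rfl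

lemma epsW_cons_eps (i : ℕ) (w : List ℕ) : epsW i ((i+1) :: w) = epsW i w + 1 := by
  have h1 : ¬ (i + 1 = i) := by omega
  simp only [epsW_cons, epsL, phiL, if_pos rfl, if_neg h1, if_true]
  omega

lemma epsW_cons_phi (i : ℕ) (w : List ℕ) : epsW i (i :: w) = epsW i w - 1 := by
  have h1 : ¬ (i = i + 1) := by omega
  simp only [epsW_cons, epsL, phiL, if_pos rfl, if_neg h1, if_true]
  omega

lemma epsW_cons_other (i a : ℕ) (w : List ℕ) (h1 : a ≠ i) (h2 : a ≠ i + 1) :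
    epsW i (a :: w) = epsW i w := by
  simp only [epsW_cons, epsL, phiL, if_neg h1, if_neg h2]
  omega

lemma P1 (i : ℕ) (u v : List ℕ) :
    epsW i (u ++ v) = max (epsW i u) (epsW i v + u.count (i+1) - u.count i) := by
  induction u with
  | nil => simp [epsW_nil]
  | cons a u ih =>
    rcases eq_or_ne a i with rfl | hai
    · rw [List.cons_append, epsW_cons_phi, ih, epsW_cons_phi,
        List.count_cons_self, List.count_cons_of_ne (ne_succ _)]
      omega
    · rcases eq_or_ne a (i+1) with rfl | hai1
      · rw [List.cons_append, epsW_cons_eps, ih, epsW_cons_eps,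
          List.count_cons_self, List.count_cons_of_ne (succ_ne _)]
        omega
      · rw [List.cons_append, epsW_cons_other i a _ hai hai1, ih,
          epsW_cons_other i a _ hai hai1,
          List.count_cons_of_ne hai1, List.count_cons_of_ne hai]

lemma E0 (i : ℕ) (w : List ℕ) : epsW i w ≤ w.count (i+1) := by
  induction w with
  | nil => simp [epsW_nil]
  | cons a w ih =>
    rcases eq_or_ne a i with rfl | hai
    · rw [epsW_cons_phi, List.count_cons_of_ne (ne_succ _)]; omega
    · rcases eq_or_ne a (i+1) with rfl | hai1
      · rw [epsW_cons_eps, List.count_cons_self]; omega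
      · rw [epsW_cons_other i a _ hai hai1, List.count_cons_of_ne hai1]; omega

lemma EPScount (i : ℕ) (w : List ℕ) : w.count (i+1) ≤ epsW i w + w.count i := by
  have := P1 i w []
  simp only [List.append_nil, epsW_nil, Nat.zero_add] at this
  omega

lemma epsW_prefix_le (i : ℕ) (u v : List ℕ) : epsW i u ≤ epsW i (u ++ v) := by
  rw [P1]; omega

end Stmt19
namespace Stmt19
open QWord

lemma phiL_self (i : ℕ) : phiL i i = 1 := if_pos rfl
lemma phiL_ne {i a : ℕ} (h : a ≠ i) : phiL i a = 0 := if_neg h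
lemma epsL_self (i : ℕ) : epsL i (i+1) = 1 := if_pos rfl
lemma epsL_ne {i a : ℕ} (h : a ≠ i + 1) : epsL i a = 0 := if_neg h
lemma eL_self (i : ℕ) : eL i (i+1) = some i := if_pos rfl
lemma eL_ne {i a : ℕ} (h : a ≠ i + 1) : eL i a = none := if_neg h
lemma fL_self (i : ℕ) : fL i i = some (i+1) := if_pos rfl
lemma fL_ne {i a : ℕ} (h : a ≠ i) : fL i a = none := if_neg h

lemma eW_nil (i : ℕ) : eW i [] = none := rfl
lemma eW_cons (i a : ℕ) (w : List ℕ) :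
    eW i (a :: w) = if epsW i w ≤ phiL i a then (eL i a).map (· :: w)
      else (eW i w).map (a :: ·) := rfl
lemma fW_nil (i : ℕ) : fW i [] = none := rfl
lemma fW_cons (i a : ℕ) (w : List ℕ) :
    fW i (a :: w) = if epsW i w < phiL i a then (fL i a).map (· :: w)
      else (fW i w).map (a :: ·) := rfl

lemma M1 (k a : ℕ) {x y : List ℕ} (h : epsW k x ≤ epsW k y) :
    epsW k (a :: x) ≤ epsW k (a :: y) := by
  rw [epsW_cons, epsW_cons]; omega

lemma M1' (k a : ℕ) {x y : List ℕ} (h : epsW k x ≤ epsW k y + 1) :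
    epsW k (a :: x) ≤ epsW k (a :: y) + 1 := by
  rw [epsW_cons, epsW_cons]; omega

lemma phiL_le (i a : ℕ) : phiL i a ≤ 1 := by unfold phiL; split <;> omega

lemma S1 (i : ℕ) : ∀ w, eW i w = none ↔ epsW i w = 0
  | [] => by simp [eW_nil, epsW_nil]
  | a :: w => by
    rw [eW_cons]
    by_cases hc : epsW i w ≤ phiL i a
    · rw [if_pos hc]
      rcases eq_or_ne a (i+1) with h1 | h1
      · subst h1
        rw [eL_self, epsW_cons_eps]
        simp
      · rw [eL_ne h1, epsW_cons, epsL_ne h1]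
        have h3 := phiL_le i a
        simp only [Option.map_none]
        constructor
        · intro _; omega
        · intro _; trivial
    · rw [if_neg hc]
      have h3 := phiL_le i a
      have h4 : ¬ (epsW i w = 0) := by omega
      rw [Option.map_eq_none_iff, S1 i w, epsW_cons]
      have h5 := epsL_ne (a := a) (i := i)
      have h6 := epsL_self i
      have h7 := phiL_ne (a := a) (i := i)
      have h8 := phiL_self i
      rcases eq_or_ne a (i+1) with h1 | h1
      · constructor
        · intro h; exact absurd h h4
        · intro h; rw [h1, h6] at h; omega
      · rw [h5 h1]
        rcases eq_or_ne a i with h2 | h2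
        · rw [h2, h8]
          constructor
          · intro h; exact absurd h h4
          · intro h
            rw [h2, h8] at hc
            omega
        · rw [h7 h2]
          constructor
          · intro h; exact absurd h h4
          · intro h; omega

end Stmt19
namespace Stmt19
open QWord

lemma E1 {i : ℕ} : ∀ {w w'}, eW i w = some w' →
    ∃ u v, w = u ++ (i+1) :: v ∧ w' = u ++ i :: v ∧ epsW i v = 0
  | [], w' => by simp [eW_nil]
  | a :: w, w' => by
    rw [eW_cons]
    by_cases hc : epsW i w ≤ phiL i a
    · rw [if_pos hc]
      rcases eq_or_ne a (i+1) with h1 | h1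
      · subst h1
        rw [eL_self]
        intro h
        simp only [Option.map_some, Option.some.injEq] at h
        refine ⟨[], w, rfl, by simp [← h], ?_⟩
        rw [phiL_ne (succ_ne i)] at hc
        omega
      · rw [eL_ne h1]; intro h; simp at h
    · rw [if_neg hc]
      intro h
      rw [Option.map_eq_some_iff] at h
      obtain ⟨t', ht', rfl⟩ := h
      obtain ⟨u, v, rfl, rfl, hv⟩ := E1 ht'
      exact ⟨a :: u, v, rfl, rfl, hv⟩

lemma S4' {i : ℕ} : ∀ {w w'}, eW i w = some w' → epsW i w = epsW i w' + 1
  | [], w' => by simp [eW_nil]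
  | a :: w, w' => by
    rw [eW_cons]
    by_cases hc : epsW i w ≤ phiL i a
    · rw [if_pos hc]
      rcases eq_or_ne a (i+1) with h1 | h1
      · subst h1
        rw [eL_self]
        intro h
        simp only [Option.map_some, Option.some.injEq] at h
        rw [← h, phiL_ne (succ_ne i)] at *
        rw [epsW_cons_eps, epsW_cons_phi]
        omega
      · rw [eL_ne h1]; intro h; simp at h
    · rw [if_neg hc]
      intro h
      rw [Option.map_eq_some_iff] at h
      obtain ⟨t', ht', rfl⟩ := h
      have ih := S4' ht'
      have h3 := phiL_le i a
      rw [epsW_cons, epsW_cons]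
      omega

lemma S3' {i : ℕ} : ∀ {w w'}, eW i w = some w' → fW i w' = some w
  | [], w' => by simp [eW_nil]
  | a :: w, w' => by
    rw [eW_cons]
    by_cases hc : epsW i w ≤ phiL i a
    · rw [if_pos hc]
      rcases eq_or_ne a (i+1) with h1 | h1
      · subst h1
        rw [eL_self]
        intro h
        simp only [Option.map_some, Option.some.injEq] at h
        rw [← h, phiL_ne (succ_ne i)] at *
        rw [fW_cons, if_pos (by rw [phiL_self]; omega), fL_self]
        rfl
      · rw [eL_ne h1]; intro h; simp at h
    · rw [if_neg hc]
      intro h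
      rw [Option.map_eq_some_iff] at h
      obtain ⟨t', ht', rfl⟩ := h
      have ih := S3' ht'
      have h4 := S4' ht'
      rw [fW_cons, if_neg (by omega), ih]
      rfl

lemma C1e {i : ℕ} (k : ℕ) (hk1 : k ≠ i + 1) (hk2 : k + 1 ≠ i) :
    ∀ {w w'}, eW i w = some w' → epsW k w' ≤ epsW k w
  | [], w' => by simp [eW_nil]
  | a :: w, w' => by
    rw [eW_cons]
    by_cases hc : epsW i w ≤ phiL i a
    · rw [if_pos hc]
      rcases eq_or_ne a (i+1) with h1 | h1
      · subst h1
        rw [eL_self]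
        intro h
        simp only [Option.map_some, Option.some.injEq] at h
        rw [← h]
        rcases eq_or_ne k i with h2 | hki
        · subst h2
          rw [epsW_cons_phi, epsW_cons_eps]; omega
        · rw [epsW_cons_other k i w (Ne.symm hki) (by omega),
            epsW_cons_other k (i+1) w (Ne.symm hk1) (by omega)]
      · rw [eL_ne h1]; intro h; simp at h
    · rw [if_neg hc]
      intro h
      rw [Option.map_eq_some_iff] at h
      obtain ⟨t', ht', rfl⟩ := h
      exact M1 k a (C1e k hk1 hk2 ht')

lemma C3 {i : ℕ} : ∀ {w w'}, eW i w = some w' → epsW (i+1) w' ≤ epsW (i+1) w + 1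
  | [], w' => by simp [eW_nil]
  | a :: w, w' => by
    rw [eW_cons]
    by_cases hc : epsW i w ≤ phiL i a
    · rw [if_pos hc]
      rcases eq_or_ne a (i+1) with h1 | h1
      · subst h1
        rw [eL_self]
        intro h
        simp only [Option.map_some, Option.some.injEq] at h
        rw [← h]
        rw [epsW_cons_other (i+1) i w (by omega) (by omega), epsW_cons_phi]
        omega
      · rw [eL_ne h1]; intro h; simp at h
    · rw [if_neg hc]
      intro h
      rw [Option.map_eq_some_iff] at h
      obtain ⟨t', ht', rfl⟩ := h
      exact M1' (i+1) a (C3 ht')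

end Stmt19
namespace Stmt19
open QWord

lemma D1 {i : ℕ} : ∀ {w w'}, fW i w = some w' →
    ∃ u v, w = u ++ i :: v ∧ w' = u ++ (i+1) :: v ∧ epsW i v = 0 ∧
      ∀ u₁ u₂, u = u₁ ++ i :: u₂ → 1 ≤ epsW i (u₂ ++ i :: v)
  | [], w' => by simp [fW_nil]
  | a :: w, w' => by
    rw [fW_cons]
    by_cases hc : epsW i w < phiL i a
    · rw [if_pos hc]
      have ha : a = i := by
        by_contra h
        rw [phiL_ne h] at hc
        omega
      rw [ha, fL_self]
      intro h
      simp only [Option.map_some, Option.some.injEq] at h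
      rw [ha, phiL_self] at hc
      refine ⟨[], w, rfl, by simp [← h], by omega, ?_⟩
      intro u₁ u₂ hx
      exact absurd hx.symm (by simp)
    · rw [if_neg hc]
      intro h
      rw [Option.map_eq_some_iff] at h
      obtain ⟨t', ht', rfl⟩ := h
      obtain ⟨u, v, rfl, rfl, hv, hleft⟩ := D1 ht'
      refine ⟨a :: u, v, rfl, rfl, hv, ?_⟩
      intro u₁ u₂ hsplit
      cases u₁ with
      | nil =>
        simp only [List.nil_append, List.cons.injEq] at hsplit
        obtain ⟨ha, hu⟩ := hsplit
        rw [ha, phiL_self] at hc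
        rw [← hu]
        omega
      | cons x u₁ =>
        simp only [List.cons_append, List.cons.injEq] at hsplit
        exact hleft u₁ u₂ hsplit.2

lemma S4 {i : ℕ} : ∀ {w w'}, fW i w = some w' → epsW i w' = epsW i w + 1
  | [], w' => by simp [fW_nil]
  | a :: w, w' => by
    rw [fW_cons]
    by_cases hc : epsW i w < phiL i a
    · rw [if_pos hc]
      have ha : a = i := by
        by_contra h
        rw [phiL_ne h] at hc
        omega
      rw [ha, fL_self]
      intro h
      simp only [Option.map_some, Option.some.injEq] at h
      rw [ha, phiL_self] at hc
      rw [← h, epsW_cons_eps, epsW_cons_phi]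
      omega
    · rw [if_neg hc]
      intro h
      rw [Option.map_eq_some_iff] at h
      obtain ⟨t', ht', rfl⟩ := h
      have ih := S4 ht'
      have h3 := phiL_le i a
      rw [epsW_cons, epsW_cons]
      omega

lemma C1 {i : ℕ} (k : ℕ) (hk : k ≠ i) :
    ∀ {w w'}, fW i w = some w' → epsW k w' ≤ epsW k w
  | [], w' => by simp [fW_nil]
  | a :: w, w' => by
    rw [fW_cons]
    by_cases hc : epsW i w < phiL i a
    · rw [if_pos hc]
      have ha : a = i := by
        by_contra h
        rw [phiL_ne h] at hc
        omega
      rw [ha, fL_self]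
      intro h
      simp only [Option.map_some, Option.some.injEq] at h
      rw [← h]
      rcases eq_or_ne k (i+1) with h2 | h2
      · subst h2
        rw [epsW_cons_phi, epsW_cons_other (i+1) i w (by omega) (by omega)]
        omega
      · rcases eq_or_ne (k+1) i with h3 | h3
        · rw [← h3, epsW_cons_other k (k+1+1) w (by omega) (by omega), epsW_cons_eps]
          omega
        · rw [epsW_cons_other k (i+1) w (Ne.symm h2) (by omega),
            epsW_cons_other k i w (Ne.symm hk) (by omega)]
    · rw [if_neg hc]
      intro h
      rw [Option.map_eq_some_iff] at h
      obtain ⟨t', ht', rfl⟩ := h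
      exact M1 k a (C1 k hk ht')

end Stmt19
namespace Stmt19
open QWord

lemma surg : ∀ (X : List ℕ) (a : ℕ) (Y U : List ℕ) (b : ℕ) (V : List ℕ),
    X ++ a :: Y = U ++ b :: V → X.length < U.length →
    ∃ Z, U = X ++ a :: Z ∧ Y = Z ++ b :: V
  | [], a, Y, U, b, V => by
    intro h hl
    cases U with
    | nil => simp at hl
    | cons u U' =>
      simp only [List.nil_append, List.cons_append, List.cons.injEq] at h
      exact ⟨U', by simp [h.1], h.2⟩
  | x :: X', a, Y, U, b, V => by
    intro h hl
    cases U with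
    | nil => simp at hl
    | cons u U' =>
      simp only [List.cons_append, List.cons.injEq] at h
      obtain ⟨Z, hz1, hz2⟩ := surg X' a Y U' b V h.2 (by simpa using hl)
      exact ⟨Z, by rw [h.1, hz1]; rfl, hz2⟩

lemma count_mid (t x : ℕ) (u v : List ℕ) :
    (u ++ x :: v).count t = u.count t + v.count t + (if x = t then 1 else 0) := by
  rcases eq_or_ne x t with rfl | hxt
  · rw [if_pos rfl, List.count_append, List.count_cons_self]
    omega
  · rw [if_neg hxt, List.count_append, List.count_cons_of_ne hxt]
    omega

lemma L10 (i : ℕ) : ∀ (α : List ℕ), ∀ (w : List ℕ),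
    α.count (i+1) + epsW i w + 1 ≤ α.count i →
    ∃ α₁ α₂, α = α₁ ++ i :: α₂ ∧ epsW i (α₂ ++ w) = 0 := by
  intro α
  induction α using List.reverseRecOn with
  | nil => intro w h; simp at h
  | append_singleton α' a ih =>
    intro w h
    have hca : ∀ t, (α' ++ [a]).count t = α'.count t + (if a = t then 1 else 0) := by
      intro t
      rw [List.count_append]
      rcases eq_or_ne a t with rfl | hat
      · simp
      · simp [List.count_singleton', hat]
    rw [hca, hca] at h
    rcases eq_or_ne a i with hai | hai
    · rw [hai] at h ⊢
      by_cases hw : epsW i w = 0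
      · exact ⟨α', [], by simp, by simpa using hw⟩
      · have h2 : α'.count (i+1) + epsW i (i :: w) + 1 ≤ α'.count i := by
          rw [epsW_cons_phi]
          rw [if_neg (ne_succ i), if_pos rfl] at h
          omega
        obtain ⟨α₁, α₂, rfl, h3⟩ := ih (i :: w) h2
        exact ⟨α₁, α₂ ++ [i], by simp, by simpa using h3⟩
    · rcases eq_or_ne a (i+1) with hai1 | hai1
      · rw [hai1] at h ⊢
        have h2 : α'.count (i+1) + epsW i ((i+1) :: w) + 1 ≤ α'.count i := by
          rw [epsW_cons_eps]
          rw [if_pos rfl, if_neg (succ_ne i)] at h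
          omega
        obtain ⟨α₁, α₂, hsp, h3⟩ := ih ((i+1) :: w) h2
        rw [hsp]
        exact ⟨α₁, α₂ ++ [i+1], by simp, by simpa using h3⟩
      · have h2 : α'.count (i+1) + epsW i (a :: w) + 1 ≤ α'.count i := by
          rw [epsW_cons_other i a w hai hai1]
          rw [if_neg hai1, if_neg hai] at h
          omega
        obtain ⟨α₁, α₂, rfl, h3⟩ := ih (a :: w) h2
        exact ⟨α₁, α₂ ++ [a], by simp, by simpa using h3⟩

lemma memE {i : ℕ} {w w' : List ℕ} (h : eW i w = some w') :
    ∀ x ∈ w', x ∈ w ∨ x = i := by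
  obtain ⟨u, v, rfl, rfl, -⟩ := E1 h
  intro x hx
  simp only [List.mem_append, List.mem_cons] at hx ⊢
  tauto

lemma countE {i : ℕ} {w w' : List ℕ} (h : eW i w = some w') :
    w.count (i+1) = w'.count (i+1) + 1 ∧ w'.count i = w.count i + 1 ∧
    ∀ t, t ≠ i → t ≠ i + 1 → w.count t = w'.count t := by
  obtain ⟨u, v, rfl, rfl, -⟩ := E1 h
  refine ⟨?_, ?_, fun t h1 h2 => ?_⟩ <;>
    simp only [count_mid] <;> split_ifs <;> omega

lemma countF {i : ℕ} {w w' : List ℕ} (h : fW i w = some w') :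
    w'.count (i+1) = w.count (i+1) + 1 ∧ w.count i = w'.count i + 1 ∧
    ∀ t, t ≠ i → t ≠ i + 1 → w.count t = w'.count t := by
  obtain ⟨u, v, rfl, rfl, -, -⟩ := D1 h
  refine ⟨?_, ?_, fun t h1 h2 => ?_⟩ <;>
    simp only [count_mid] <;> split_ifs <;> omega

def fseqD (k : ℕ) : ℕ → List ℕ → Option (List ℕ)
  | 0, b => some b
  | m+1, b => (fW (k+m) b).bind (fseqD k m)

lemma fseq_eq_fseqD : ∀ (m : ℕ) (b : List ℕ), fseq m b = fseqD 0 m b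
  | 0, _ => rfl
  | m+1, b => by
    show (fW m b).bind (fseq m) = (fW (0+m) b).bind (fseqD 0 m)
    rw [Nat.zero_add]
    cases fW m b with
    | none => rfl
    | some c => exact fseq_eq_fseqD m c

lemma fseqD_split (k m p : ℕ) : ∀ b, fseqD k (m + p) b = (fseqD (k+m) p b).bind (fseqD k m) := by
  induction p with
  | zero => intro b; simp [fseqD]
  | succ p ih =>
    intro b
    show fseqD k ((m+p)+1) b = ((fW ((k+m)+p) b).bind (fseqD (k+m) p)).bind (fseqD k m)
    show (fW (k+(m+p)) b).bind (fseqD k (m+p)) = _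
    rw [Option.bind_assoc, ← Nat.add_assoc]
    cases fW (k+m+p) b with
    | none => rfl
    | some c => exact ih c

lemma ch1 (k : ℕ) : ∀ (m : ℕ) {b y : List ℕ}, fseqD k m b = some y →
    ∀ t, (t < k ∨ k + m ≤ t) → epsW t y ≤ epsW t b
  | 0, b, y => by
    intro h t _
    simp only [fseqD, Option.some.injEq] at h
    rw [h]
  | m+1, b, y => by
    intro h t ht
    have h' : (fW (k+m) b).bind (fseqD k m) = some y := h
    obtain ⟨c, h1, h2⟩ := Option.bind_eq_some_iff.mp h'
    calc epsW t y ≤ epsW t c := ch1 k m h2 t (by omega)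
    _ ≤ epsW t b := C1 t (by omega) h1

lemma countD (k : ℕ) : ∀ (m : ℕ) {b y : List ℕ}, fseqD k (m+1) b = some y →
    y.count (k+m+1) = b.count (k+m+1) + 1 ∧ b.count k = y.count k + 1 ∧
    ∀ t, t ≠ k → t ≠ k+m+1 → y.count t = b.count t
  | 0, b, y => by
    intro h
    have h' : (fW (k+0) b).bind (fseqD k 0) = some y := h
    obtain ⟨c, h1, h2⟩ := Option.bind_eq_some_iff.mp h'
    simp only [fseqD, Option.some.injEq] at h2
    subst h2
    obtain ⟨c1, c2, c3⟩ := countF h1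
    refine ⟨by simpa using c1, by simpa using c2, fun t h1' h2' => ?_⟩
    have := c3 t (by omega) (by omega)
    omega
  | m+1, b, y => by
    intro h
    have h' : (fW (k+(m+1)) b).bind (fseqD k (m+1)) = some y := h
    obtain ⟨c, h1, h2⟩ := Option.bind_eq_some_iff.mp h'
    obtain ⟨hf1, hf2, hf3⟩ := countF h1
    obtain ⟨hi1, hi2, hi3⟩ := countD k m h2
    rw [show k+(m+1) = k+m+1 by omega] at hf1 hf2 ⊢
    have hf3' := fun (t : ℕ) (h1 : t ≠ k+m+1) (h2 : t ≠ k+m+1+1) =>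
      hf3 t (by omega) (by omega)
    refine ⟨?_, ?_, fun t ht1 ht2 => ?_⟩
    · have := hi3 (k+m+1+1) (by omega) (by omega)
      omega
    · have := hf3' k (by omega) (by omega)
      omega
    · rcases eq_or_ne t (k+m+1) with rfl | ht3
      · omega
      · have := hf3' t (by omega) (by omega)
        have := hi3 t (by omega) (by omega)
        omega

end Stmt19
namespace Stmt19
open QWord

lemma CRUXf {k : ℕ} {d c x : List ℕ} (h1 : fW (k+1) d = some c) (h2 : fW k c = some x)
    (hd1 : epsW (k+1) d = 0) (hd0 : epsW k d = 0) : epsW (k+1) x = 0 := by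
  obtain ⟨α, β, hdeq, hceq, hβ, -⟩ := D1 h1
  -- d = α ++ (k+1) :: β, c = α ++ (k+1+1) :: β, epsW (k+1) β = 0
  have hc1 : epsW (k+1) c = 1 := by rw [S4 h1, hd1]
  -- L10 hypothesis from epsW k d = 0
  have hd0' : epsW k (α ++ (k+1) :: β) = 0 := by rw [← hdeq]; exact hd0
  rw [P1, epsW_cons_eps] at hd0'
  have hL : α.count (k+1) + epsW k ((k+1+1) :: β) + 1 ≤ α.count k := by
    rw [epsW_cons_other k (k+1+1) β (by omega) (by omega)]
    omega
  obtain ⟨α₁, α₂, hα, hα₂⟩ := L10 k α ((k+1+1) :: β) hL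
  obtain ⟨g, h, hceq', hxeq, hh, hleft⟩ := D1 h2
  -- c = g ++ k :: h, x = g ++ (k+1) :: h, epsW k h = 0
  have hglen : g.length ≤ α₁.length := by
    by_contra hlen
    push_neg at hlen
    have hc2 : α₁ ++ k :: (α₂ ++ (k+1+1) :: β) = g ++ k :: h := by
      rw [← hceq', hceq, hα]; simp
    obtain ⟨Z, hgz, hz2⟩ := surg α₁ k _ g k h hc2 hlen
    have hlm := hleft α₁ Z hgz
    rw [← hz2, hα₂] at hlm
    omega
  -- split α at position of g
  have hc3 : g ++ k :: h = α ++ (k+1+1) :: β := by rw [← hceq', hceq]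
  obtain ⟨α₃, hα3, hh3⟩ := surg g k h α (k+1+1) β hc3
    (by rw [hα]; simp only [List.length_append, List.length_cons]; omega)
  -- epsW (k+1) g = 0 and count ineq from hd1
  have hdg := hd1
  rw [hdeq, hα3, List.append_assoc, List.cons_append, P1] at hdg
  -- epsW (k+1) from c decomposition
  have hcg : epsW (k+1) (g ++ k :: h) = 1 := by rw [← hceq']; exact hc1
  rw [P1, epsW_cons_other (k+1) k h (by omega) (by omega)] at hcg
  -- final computation
  rw [hxeq, P1, epsW_cons_phi]
  omega

lemma CRUXe {k : ℕ} {g h w₂ : List ℕ}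
    (hh : epsW k h = 0)
    (h0 : epsW (k+1) (g ++ (k+1) :: h) = 0)
    (hw1 : epsW k (g ++ k :: h) = 0)
    (he : eW (k+1) (g ++ k :: h) = some w₂) : epsW k w₂ = 0 := by
  obtain ⟨G, H, hG1, hG2, hH⟩ := E1 he
  -- g ++ k :: h = G ++ (k+1+1) :: H, w₂ = G ++ (k+1) :: H, epsW (k+1) H = 0
  have hw1e : 1 ≤ epsW (k+1) (g ++ k :: h) := by
    have := S4' he
    omega
  -- step 1 : g.length < G.length
  have hlen : g.length < G.length := by
    rcases lt_trichotomy G.length g.length with hl | hl | hl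
    · exfalso
      obtain ⟨g₂, hg2, hh2⟩ := surg G (k+1+1) H g k h hG1.symm hl
      -- g = G ++ (k+2) :: g₂, H = g₂ ++ k :: h
      have hw0 : epsW (k+1) (G ++ ((k+1+1) :: (g₂ ++ (k+1) :: h))) = 0 := by
        rw [← List.cons_append, ← List.append_assoc, ← hg2]
        exact h0
      rw [P1, epsW_cons_eps] at hw0
      have hw1' : epsW (k+1) (G ++ (k+1+1) :: H) = epsW (k+1) (g ++ k :: h) := by
        rw [hG1]
      rw [P1, epsW_cons_eps, hH] at hw1'
      omega
    · exfalso
      obtain ⟨-, h2⟩ := List.append_inj hG1 hl.symm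
      simp only [List.cons.injEq] at h2
      omega
    · exact hl
  obtain ⟨G₂, hG3, hh3⟩ := surg g k h G (k+1+1) H hG1 hlen
  -- G = g ++ k :: G₂, h = G₂ ++ (k+2) :: H
  -- facts from hh
  have hhh : epsW k (G₂ ++ (k+1+1) :: H) = 0 := by rw [← hh3]; exact hh
  rw [P1, epsW_cons_other k (k+1+1) H (by omega) (by omega)] at hhh
  -- facts from hw1
  have hw1' : epsW k (g ++ k :: h) = 0 := hw1
  rw [P1, epsW_cons_phi] at hw1'
  -- final
  rw [hG2, hG3, List.append_assoc, List.cons_append, P1, epsW_cons_phi, P1,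
    epsW_cons_eps]
  omega

end Stmt19
namespace Stmt19
open QWord

lemma main_rev (j : ℕ) {b b' : List ℕ} (hb : ∀ i, epsW i b = 0)
    (hf : fseqD 0 j b = some b') :
    epsW 0 b' ≤ 1 ∧ ∀ i, 1 ≤ i → epsW i b' = 0 := by
  rcases Nat.eq_zero_or_pos j with rfl | hj
  · simp only [fseqD, Option.some.injEq] at hf
    subst hf
    exact ⟨by rw [hb 0]; omega, fun i _ => hb i⟩
  constructor
  · -- epsW 0 b' ≤ 1
    have hsplit := fseqD_split 0 1 (j - 1) b
    rw [show 1 + (j - 1) = j by omega] at hsplit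
    rw [hsplit] at hf
    obtain ⟨c, hc, h1⟩ := Option.bind_eq_some_iff.mp hf
    have h1' : (fW (0+0) c).bind (fseqD 0 0) = some b' := h1
    obtain ⟨c2, hfw, h2⟩ := Option.bind_eq_some_iff.mp h1'
    simp only [fseqD, Option.some.injEq] at h2
    subst h2
    rw [Nat.add_zero] at hfw
    have hS := S4 hfw
    have hch := ch1 1 (j - 1) hc 0 (Or.inl (by omega))
    rw [hb 0] at hch
    omega
  · intro i hi1
    by_cases hij : j ≤ i
    · have := ch1 0 j hf i (Or.inr (by omega))
      rw [hb i] at this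
      omega
    · push_neg at hij
      obtain ⟨q, rfl⟩ : ∃ q, i = q + 1 := ⟨i - 1, by omega⟩
      obtain ⟨p, rfl⟩ : ∃ p, j = (q + 2) + p := ⟨j - q - 2, by omega⟩
      rw [fseqD_split 0 (q+2) p b] at hf
      obtain ⟨d, hd, hrest⟩ := Option.bind_eq_some_iff.mp hf
      rw [Nat.zero_add] at hd
      rw [fseqD_split 0 q 2 d, Nat.zero_add] at hrest
      obtain ⟨x, hx2, hlow⟩ := Option.bind_eq_some_iff.mp hrest
      have hx2' : (fW (q+1) d).bind (fseqD q 1) = some x := hx2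
      obtain ⟨c, hfw1, h3⟩ := Option.bind_eq_some_iff.mp hx2'
      have h3' : (fW (q+0) c).bind (fseqD q 0) = some x := h3
      obtain ⟨c3, hfw2, h4⟩ := Option.bind_eq_some_iff.mp h3'
      simp only [fseqD, Option.some.injEq] at h4
      subst h4
      rw [Nat.add_zero] at hfw2
      have hd1 : epsW (q+1) d = 0 := by
        have := ch1 (q+2) p hd (q+1) (Or.inl (by omega))
        rw [hb (q+1)] at this
        omega
      have hd0 : epsW q d = 0 := by
        have := ch1 (q+2) p hd q (Or.inl (by omega))
        rw [hb q] at this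
        omega
      have hx : epsW (q+1) c3 = 0 := CRUXf hfw1 hfw2 hd1 hd0
      have := ch1 0 q hlow (q+1) (Or.inr (by omega))
      omega

lemma greedy {n : ℕ} : ∀ (m k : ℕ) (y : List ℕ), k < n → n ≤ k + m →
    (∀ a ∈ y, a < n) →
    (∀ i, i ≠ k → epsW i y = 0) → epsW k y ≤ 1 →
    (k = 0 ∨ ∃ g h, y = g ++ (k-1) :: h ∧ epsW (k-1) h = 0 ∧ epsW k (g ++ k :: h) = 0) →
    ∃ j b, k ≤ j ∧ j < n ∧ (∀ a ∈ b, a < n) ∧ (∀ i, epsW i b = 0) ∧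
      fseqD k (j - k) b = some y
  | 0 => by
    intro k y hkn hnm _ _ _ _
    omega
  | m + 1 => by
    intro k y hkn hnm hylet hinv hk1 hpos
    by_cases h0 : epsW k y = 0
    · refine ⟨k, y, le_refl k, hkn, hylet, fun i => ?_, ?_⟩
      · rcases eq_or_ne i k with rfl | hik
        · exact h0
        · exact hinv i hik
      · rw [Nat.sub_self]
        rfl
    · have h1 : epsW k y = 1 := by omega
      obtain ⟨w₂, hew⟩ : ∃ w₂, eW k y = some w₂ := by
        cases hew : eW k y with
        | none => exact absurd ((S1 k y).mp hew) h0
        | some w => exact ⟨w, rfl⟩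
      obtain ⟨G, H, hy1, hw2, hH⟩ := E1 hew
      have hk1n : k + 1 < n := hylet (k+1) (by rw [hy1]; simp)
      have hw2let : ∀ a ∈ w₂, a < n := by
        intro a ha
        rcases memE hew a ha with hm | rfl
        · exact hylet a hm
        · omega
      have inv' : ∀ i, i ≠ k + 1 → epsW i w₂ = 0 := by
        intro i hik1
        rcases eq_or_ne i k with rfl | hik
        · have := S4' hew
          omega
        · rcases eq_or_ne (i+1) k with hik2 | hik2
          · rcases hpos with hk0 | ⟨g, h, hy2, hh, h0'⟩
            · omega
            · rw [show k - 1 = i by omega] at hy2 hh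
              rw [← hik2] at h0'
              have hw1' : epsW i (g ++ i :: h) = 0 := by
                rw [← hy2]
                exact hinv i hik
              have he' : eW (i+1) (g ++ i :: h) = some w₂ := by
                rw [← hy2, hik2]
                exact hew
              exact CRUXe hh h0' hw1' he'
          · have hle := C1e i hik1 hik2 hew
            rw [hinv i hik] at hle
            omega
      have epsk1 : epsW (k+1) w₂ ≤ 1 := by
        have := C3 hew
        rw [hinv (k+1) (succ_ne k)] at this
        omega
      have newpos : (k + 1 = 0 ∨ ∃ g h, w₂ = g ++ (k+1-1) :: h ∧ epsW (k+1-1) h = 0 ∧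
          epsW (k+1) (g ++ (k+1) :: h) = 0) := by
        refine Or.inr ⟨G, H, ?_, ?_, ?_⟩
        · rw [Nat.add_sub_cancel]
          exact hw2
        · rw [Nat.add_sub_cancel]
          exact hH
        · rw [← hy1]
          exact hinv (k+1) (succ_ne k)
      obtain ⟨j, b, hj1, hj2, hb1, hb2, hb3⟩ :=
        greedy m (k+1) w₂ hk1n (by omega) hw2let inv' epsk1 newpos
      refine ⟨j, b, by omega, hj2, hb1, hb2, ?_⟩
      rw [show j - k = 1 + (j - (k+1)) by omega, fseqD_split k 1 (j - (k+1)) b, hb3]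
      show fseqD k 1 w₂ = some y
      show (fW (k+0) w₂).bind (fseqD k 0) = some y
      rw [Nat.add_zero, S3' hew]
      rfl

end Stmt19

open Stmt19

/-- a word `1 ⊗ b' ∈ 𝐁^{⊗(N+1)}` (letters in `{1,…,n}`, here
`0`-based) is a `gl(n)`-highest weight word if and only if
`b' = f₁ ⋯ f_{j-1} b` for some `gl(n)`-highest weight word `b ∈ 𝐁^{⊗N}` and
some `j ∈ {1,…,n}` (here `0`-based `j ∈ {0,…,n-1}`) such that
`wt(b) + ε_j` is again a partition. -/
theorem stmt_19 (n : ℕ) (hn : 1 ≤ n) (b' : List ℕ) (hb' : ∀ a ∈ b', a < n) :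
    (∀ i, i + 1 < n → eW i (0 :: b') = none) ↔
      ∃ (b : List ℕ) (j : ℕ), j < n ∧ (∀ a ∈ b, a < n) ∧
        (∀ i, i + 1 < n → eW i b = none) ∧
        (j = 0 ∨ b.count j < b.count (j - 1)) ∧
        fseq j b = some b' := by
  have hcount0 : ∀ (w : List ℕ) (i : ℕ), (∀ a ∈ w, a < n) → ¬ (i + 1 < n) →
      epsW i w = 0 := by
    intro w i hw hin
    have hc : w.count (i+1) = 0 :=
      List.count_eq_zero_of_not_mem (fun hm => absurd (hw _ hm) (by omega))
    have := E0 i w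
    omega
  constructor
  · intro hhw
    have hepsi : ∀ i, 1 ≤ i → epsW i b' = 0 := by
      intro i hi
      by_cases hin : i + 1 < n
      · have h := hhw i hin
        rw [eW_cons, phiL_ne (by omega : (0:ℕ) ≠ i), eL_ne (by omega : (0:ℕ) ≠ i + 1)] at h
        by_cases hc : epsW i b' ≤ 0
        · omega
        · rw [if_neg hc, Option.map_eq_none_iff, S1] at h
          omega
      · exact hcount0 b' i hb' hin
    have heps0 : epsW 0 b' ≤ 1 := by
      by_cases h1n : 0 + 1 < n
      · have h := hhw 0 h1n
        rw [eW_cons, phiL_self, eL_ne (by omega : (0:ℕ) ≠ 0 + 1)] at h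
        by_cases hc : epsW 0 b' ≤ 1
        · exact hc
        · rw [if_neg hc, Option.map_eq_none_iff, S1] at h
          omega
      · rw [hcount0 b' 0 hb' h1n]
        omega
    obtain ⟨j, b, -, hjn, hbl, hbhw, hchain⟩ :=
      greedy n 0 b' (by omega) (by omega) hb' (fun i hi => hepsi i (by omega)) heps0
        (Or.inl rfl)
    rw [Nat.sub_zero] at hchain
    refine ⟨b, j, hjn, hbl, fun i _ => (S1 i b).mpr (hbhw i), ?_, ?_⟩
    · rcases Nat.eq_zero_or_pos j with rfl | hj1
      · exact Or.inl rfl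
      · refine Or.inr ?_
        obtain ⟨p, rfl⟩ : ∃ p, j = p + 1 := ⟨j - 1, by omega⟩
        have hcd := countD 0 p hchain
        rw [Nat.zero_add] at hcd
        obtain ⟨hc1, hc2, hc3⟩ := hcd
        rcases Nat.eq_zero_or_pos p with rfl | hp1
        · -- j = 1
          have := EPScount 0 b'
          rw [Nat.add_sub_cancel]
          omega
        · -- j ≥ 2
          have hep := EPScount p b'
          rw [hepsi p (by omega)] at hep
          have hcp := hc3 p (by omega) (by omega)
          rw [Nat.add_sub_cancel]
          omega
    · rw [fseq_eq_fseqD]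
      exact hchain
  · rintro ⟨b, j, hjn, hbl, hbhw, hcnt, hfseq⟩
    have hbhw' : ∀ i, epsW i b = 0 := by
      intro i
      by_cases hin : i + 1 < n
      · exact (S1 i b).mp (hbhw i hin)
      · exact hcount0 b i hbl hin
    rw [fseq_eq_fseqD] at hfseq
    obtain ⟨h0, hi⟩ := main_rev j hbhw' hfseq
    intro i hin
    rw [eW_cons]
    rcases Nat.eq_zero_or_pos i with rfl | hi1
    · rw [phiL_self, eL_ne (by omega : (0:ℕ) ≠ 0 + 1), if_pos (by omega)]
      rfl
    · rw [phiL_ne (by omega : (0:ℕ) ≠ i), eL_ne (by omega : (0:ℕ) ≠ i + 1),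
        if_pos (by rw [hi i (by omega)])]
      rfl
end
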